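/- arXiv:2204.11362 — 12 statements merged into one kernel-verified Lean document; each statement's English description precedes it below -/
import Mathlib

section
/- If S = V(G) is the full vertex set of a graph G satisfying: (i) G is twin-free, (ii) minimum degree at least 2, (iii) no two adjacent degree-2 vertices, and (iv) every triangle abc has |N[a] △ N[b]| ≥ 3, then S is an error-correcting identifying code, i.e., every vertex v has |N[v]| ≥ 3 and every pair of distinct vertices u,v has |N[u] △ N[v]| ≥ 3. -/
open SimpleGraph

variable {V : Type*}

/-- Closed neighborhood of `v` in `G`. -/
def closedNbhd (G : SimpleGraph V) (v : V) : Set V := insert v (G.neighborSet v)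

/-- `S` is an error-correcting identifying code for `G`. -/
def IsErrIC (G : SimpleGraph V) (S : Set V) : Prop :=
  (∀ v : V, 3 ≤ (closedNbhd G v ∩ S).ncard) ∧
  ∀ u v : V, u ≠ v → 3 ≤ (symmDiff (closedNbhd G u ∩ S) (closedNbhd G v ∩ S)).ncard

/-- `G` has no twins. -/
def TwinFree (G : SimpleGraph V) : Prop :=
  ∀ u v : V, u ≠ v →
    closedNbhd G u ≠ closedNbhd G v ∧ G.neighborSet u ≠ G.neighborSet v

lemma mem_closedNbhd_iff (G : SimpleGraph V) (v x : V) :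
    x ∈ closedNbhd G v ↔ x = v ∨ G.Adj v x := by
  simp [closedNbhd]

lemma three_le_ncard_of_triple [Fintype V] {s : Set V} {x y z : V}
    (hx : x ∈ s) (hy : y ∈ s) (hz : z ∈ s)
    (hxy : x ≠ y) (hxz : x ≠ z) (hyz : y ≠ z) : 3 ≤ s.ncard := by
  have hsub : ({x, y, z} : Set V) ⊆ s := by
    intro a ha
    rcases ha with rfl | rfl | rfl <;> assumption
  have h3 : ({x, y, z} : Set V).ncard = 3 := by
    rw [Set.ncard_insert_of_notMem (by simp [hxy, hxz]),
        Set.ncard_insert_of_notMem (by simp [hyz]), Set.ncard_singleton]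
  calc 3 = ({x, y, z} : Set V).ncard := h3.symm
    _ ≤ s.ncard := Set.ncard_le_ncard hsub (Set.toFinite s)

theorem stmt0 [Fintype V] (G : SimpleGraph V)
    (h1 : TwinFree G)
    (h2 : ∀ v : V, 2 ≤ (G.neighborSet v).ncard)
    (h3 : ∀ u v : V, G.Adj u v →
      ¬((G.neighborSet u).ncard = 2 ∧ (G.neighborSet v).ncard = 2))
    (h4 : ∀ a b c : V, G.Adj a b → G.Adj b c → G.Adj a c →
      3 ≤ (symmDiff (closedNbhd G a) (closedNbhd G b)).ncard) :
    IsErrIC G Set.univ := by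
  constructor
  · intro v
    simp only [Set.inter_univ]
    have hv : v ∉ G.neighborSet v := by simp
    rw [closedNbhd, Set.ncard_insert_of_notMem hv]
    have := h2 v
    omega
  · intro u v huv
    simp only [Set.inter_univ]
    by_cases hadj : G.Adj u v
    · by_cases hw : ∃ w, G.Adj u w ∧ G.Adj v w
      · obtain ⟨w, hu, hv⟩ := hw
        exact h4 u v w hadj hv hu
      · push_neg at hw
        -- pick y ∈ N(v), y ≠ u
        have hy : ∃ y, G.Adj v y ∧ y ≠ u := by
          have h2v := h2 v
          have : 1 < (G.neighborSet v).ncard := by omega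
          rw [Set.one_lt_ncard_iff] at this
          obtain ⟨a, b, ha, hb, hab⟩ := this
          by_cases hau : a = u
          · exact ⟨b, hb, fun h => hab (by rw [hau, h])⟩
          · exact ⟨a, ha, hau⟩
        obtain ⟨y, hvy, hyu⟩ := hy
        have hyD : y ∈ symmDiff (closedNbhd G u) (closedNbhd G v) := by
          rw [Set.mem_symmDiff]
          right
          refine ⟨(mem_closedNbhd_iff G v y).2 (Or.inr hvy), ?_⟩
          rw [mem_closedNbhd_iff]
          push_neg
          exact ⟨hyu, fun h => hw y h hvy⟩
        have key : ∀ x, G.Adj u x → x ≠ v →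
            x ∈ symmDiff (closedNbhd G u) (closedNbhd G v) := by
          intro x hux hxv
          rw [Set.mem_symmDiff]
          left
          refine ⟨(mem_closedNbhd_iff G u x).2 (Or.inr hux), ?_⟩
          rw [mem_closedNbhd_iff]
          push_neg
          exact ⟨hxv, fun h => hw x hux h⟩
        by_cases h3u : 3 ≤ (G.neighborSet u).ncard
        · have hvNu : v ∈ G.neighborSet u := hadj
          have hd : (G.neighborSet u \ {v}).ncard = (G.neighborSet u).ncard - 1 :=
            Set.ncard_diff_singleton_of_mem hvNu
          have : 1 < (G.neighborSet u \ {v}).ncard := by omega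
          rw [Set.one_lt_ncard_iff] at this
          obtain ⟨x, x', ⟨hx, hxv⟩, ⟨hx', hx'v⟩, hxx'⟩ := this
          have hxD := key x hx (by simpa using hxv)
          have hx'D := key x' hx' (by simpa using hx'v)
          refine three_le_ncard_of_triple hxD hx'D hyD hxx' ?_ ?_
          · rintro rfl; exact hw x hx hvy
          · rintro rfl; exact hw x' hx' hvy
        · by_cases h3v : 3 ≤ (G.neighborSet v).ncard
          · -- symmetric: two neighbors of v distinct from u, plus a neighbor of u ≠ v
            have hx : ∃ x, G.Adj u x ∧ x ≠ v := by
              have h2u := h2 u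
              have : 1 < (G.neighborSet u).ncard := by omega
              rw [Set.one_lt_ncard_iff] at this
              obtain ⟨a, b, ha, hb, hab⟩ := this
              by_cases hav : a = v
              · exact ⟨b, hb, fun h => hab (by rw [hav, h])⟩
              · exact ⟨a, ha, hav⟩
            obtain ⟨x, hux, hxv⟩ := hx
            have hxD := key x hux hxv
            have key' : ∀ z, G.Adj v z → z ≠ u →
                z ∈ symmDiff (closedNbhd G u) (closedNbhd G v) := by
              intro z hvz hzu
              rw [Set.mem_symmDiff]
              right
              refine ⟨(mem_closedNbhd_iff G v z).2 (Or.inr hvz), ?_⟩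
              rw [mem_closedNbhd_iff]
              push_neg
              exact ⟨hzu, fun h => hw z h hvz⟩
            have huNv : u ∈ G.neighborSet v := hadj.symm
            have hd : (G.neighborSet v \ {u}).ncard = (G.neighborSet v).ncard - 1 :=
              Set.ncard_diff_singleton_of_mem huNv
            have : 1 < (G.neighborSet v \ {u}).ncard := by omega
            rw [Set.one_lt_ncard_iff] at this
            obtain ⟨z, z', ⟨hz, hzu⟩, ⟨hz', hz'u⟩, hzz'⟩ := this
            have hzD := key' z hz (by simpa using hzu)
            have hz'D := key' z' hz' (by simpa using hz'u)
            refine three_le_ncard_of_triple hxD hzD hz'D ?_ ?_ hzz'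
            · rintro rfl; exact hw x hux hz
            · rintro rfl; exact hw x hux hz'
          · exfalso
            have h2u := h2 u
            have h2v := h2 v
            exact h3 u v hadj ⟨by omega, by omega⟩
    · -- nonadjacent case
      have huD : u ∈ symmDiff (closedNbhd G u) (closedNbhd G v) := by
        rw [Set.mem_symmDiff]
        left
        refine ⟨(mem_closedNbhd_iff G u u).2 (Or.inl rfl), ?_⟩
        rw [mem_closedNbhd_iff]
        push_neg
        exact ⟨huv, fun h => hadj h.symm⟩
      have hvD : v ∈ symmDiff (closedNbhd G u) (closedNbhd G v) := by
        rw [Set.mem_symmDiff]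
        right
        refine ⟨(mem_closedNbhd_iff G v v).2 (Or.inl rfl), ?_⟩
        rw [mem_closedNbhd_iff]
        push_neg
        exact ⟨huv.symm, fun h => hadj h⟩
      have hne := (h1 u v huv).2
      have hex : ∃ w, ¬(w ∈ G.neighborSet u ↔ w ∈ G.neighborSet v) := by
        by_contra h
        push_neg at h
        exact hne (Set.ext fun w => not_not.mp (fun hc => hc (h w)))
      obtain ⟨w, hwiff⟩ := hex
      rw [not_iff] at hwiff
      have hwD : w ∈ symmDiff (closedNbhd G u) (closedNbhd G v) ∧ w ≠ u ∧ w ≠ v := by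
        by_cases hwu : w ∈ G.neighborSet u
        · have hwv : w ∉ G.neighborSet v := fun h => (hwiff.2 h) hwu
          have hwnu : w ≠ u := fun h => G.irrefl (h ▸ hwu)
          have hwnv : w ≠ v := fun h => hadj (h ▸ hwu)
          refine ⟨?_, hwnu, hwnv⟩
          rw [Set.mem_symmDiff]
          left
          refine ⟨(mem_closedNbhd_iff G u w).2 (Or.inr hwu), ?_⟩
          rw [mem_closedNbhd_iff]
          push_neg
          exact ⟨hwnv, hwv⟩
        · have hwv : w ∈ G.neighborSet v := hwiff.1 hwu
          have hwnv : w ≠ v := fun h => G.irrefl (h ▸ hwv)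
          have hwnu : w ≠ u := fun h => hadj ((h ▸ hwv) : G.Adj v u).symm
          refine ⟨?_, hwnu, hwnv⟩
          rw [Set.mem_symmDiff]
          right
          refine ⟨(mem_closedNbhd_iff G v w).2 (Or.inr hwv), ?_⟩
          rw [mem_closedNbhd_iff]
          push_neg
          exact ⟨hwnu, hwu⟩
      obtain ⟨hwD, hwu, hwv⟩ := hwD
      exact three_le_ncard_of_triple huD hvD hwD huv (fun h => hwu h.symm) (fun h => hwv h.symm)
end

section
/- A graph G admits an error-correcting identifying code if and only if (i) G is twin-free, (ii) δ(G) ≥ 2, (iii) G has no two adjacent vertices both of degree 2, and (iv) every triangle abc in G satisfies |N[a] △ N[b]| ≥ 3 (for all three pairs of the triangle). -/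
open SimpleGraph

variable {V : Type*}

lemma mem_closedNbhd {G : SimpleGraph V} {v x : V} :
    x ∈ closedNbhd G v ↔ x = v ∨ G.Adj v x := by
  simp [closedNbhd]

lemma symmDiff_inter_subset (A B S : Set V) :
    symmDiff (A ∩ S) (B ∩ S) ⊆ symmDiff A B := by
  intro x hx
  simp only [Set.mem_symmDiff, Set.mem_inter_iff] at *
  tauto

lemma ncard_closedNbhd [Fintype V] (G : SimpleGraph V) (v : V) :
    (closedNbhd G v).ncard = (G.neighborSet v).ncard + 1 := by
  rw [closedNbhd, Set.ncard_insert_of_notMem (by simp) (Set.toFinite _)]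

lemma pair_subset_closedNbhd {G : SimpleGraph V} {u v : V} (h : G.Adj u v) :
    ({u, v} : Set V) ⊆ closedNbhd G u ∩ closedNbhd G v := by
  rintro x (rfl | rfl)
  · exact ⟨mem_closedNbhd.mpr (Or.inl rfl), mem_closedNbhd.mpr (Or.inr h.symm)⟩
  · exact ⟨mem_closedNbhd.mpr (Or.inr h), mem_closedNbhd.mpr (Or.inl rfl)⟩

theorem stmt1 [Fintype V] (G : SimpleGraph V) :
    (∃ S : Set V, IsErrIC G S) ↔
      (TwinFree G ∧
       (∀ v : V, 2 ≤ (G.neighborSet v).ncard) ∧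
       (∀ u v : V, G.Adj u v →
         ¬((G.neighborSet u).ncard = 2 ∧ (G.neighborSet v).ncard = 2)) ∧
       (∀ a b c : V, G.Adj a b → G.Adj b c → G.Adj a c →
         3 ≤ (symmDiff (closedNbhd G a) (closedNbhd G b)).ncard)) := by
  constructor
  · rintro ⟨S, hdom, hdis⟩
    have hsub : ∀ u v : V,
        symmDiff (closedNbhd G u ∩ S) (closedNbhd G v ∩ S)
          ⊆ symmDiff (closedNbhd G u) (closedNbhd G v) :=
      fun u v => symmDiff_inter_subset _ _ _
    have hdeg : ∀ v : V, 2 ≤ (G.neighborSet v).ncard := by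
      intro v
      have h1 := hdom v
      have h2 : (closedNbhd G v ∩ S).ncard ≤ (closedNbhd G v).ncard :=
        Set.ncard_le_ncard Set.inter_subset_left (Set.toFinite _)
      have h3 := ncard_closedNbhd G v
      omega
    refine ⟨?_, hdeg, ?_, ?_⟩
    · -- TwinFree
      intro u v huv
      constructor
      · intro h
        have hd := hdis u v huv
        rw [h, symmDiff_self] at hd
        simpa using hd
      · intro h
        have hna : ¬ G.Adj u v := by
          intro ha
          have hv : v ∈ G.neighborSet u := ha
          rw [h] at hv
          exact G.irrefl hv
        have hsub2 : symmDiff (closedNbhd G u) (closedNbhd G v) ⊆ {u, v} := by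
          intro x hx
          rw [Set.mem_symmDiff] at hx
          rcases hx with ⟨hxu, hxv⟩ | ⟨hxv, hxu⟩
          · rcases mem_closedNbhd.mp hxu with rfl | hadj
            · exact Or.inl rfl
            · have : x ∈ G.neighborSet v := h ▸ hadj
              exact absurd (mem_closedNbhd.mpr (Or.inr this)) hxv
          · rcases mem_closedNbhd.mp hxv with rfl | hadj
            · exact Or.inr rfl
            · have : x ∈ G.neighborSet u := h ▸ hadj
              exact absurd (mem_closedNbhd.mpr (Or.inr this)) hxu
        have h1 := hdis u v huv
        have h2 : (symmDiff (closedNbhd G u ∩ S) (closedNbhd G v ∩ S)).ncard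
            ≤ ({u, v} : Set V).ncard :=
          Set.ncard_le_ncard ((hsub u v).trans hsub2) (Set.toFinite _)
        have h3 : ({u, v} : Set V).ncard = 2 := Set.ncard_pair huv
        omega
    · -- no adjacent degree-2 pair
      rintro u v hadj ⟨hu2, hv2⟩
      have hfu : closedNbhd G u ∩ S = closedNbhd G u := by
        apply Set.eq_of_subset_of_ncard_le Set.inter_subset_left _ (Set.toFinite _)
        rw [ncard_closedNbhd, hu2]
        exact hdom u
      have hfv : closedNbhd G v ∩ S = closedNbhd G v := by
        apply Set.eq_of_subset_of_ncard_le Set.inter_subset_left _ (Set.toFinite _)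
        rw [ncard_closedNbhd, hv2]
        exact hdom v
      have hd := hdis u v hadj.ne
      rw [hfu, hfv, Set.symmDiff_def] at hd
      have hp := pair_subset_closedNbhd hadj
      have hpu : ({u, v} : Set V) ⊆ closedNbhd G u := hp.trans Set.inter_subset_left
      have hpv : ({u, v} : Set V) ⊆ closedNbhd G v := hp.trans Set.inter_subset_right
      have h1 : (closedNbhd G u \ closedNbhd G v).ncard
          ≤ (closedNbhd G u \ {u, v}).ncard :=
        Set.ncard_le_ncard (Set.diff_subset_diff_right hpv) (Set.toFinite _)
      have h2 : (closedNbhd G v \ closedNbhd G u).ncard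
          ≤ (closedNbhd G v \ {u, v}).ncard :=
        Set.ncard_le_ncard (Set.diff_subset_diff_right hpu) (Set.toFinite _)
      have h3 : (closedNbhd G u \ {u, v}).ncard = 1 := by
        rw [Set.ncard_diff hpu (Set.toFinite _), Set.ncard_pair hadj.ne,
          ncard_closedNbhd, hu2]
      have h4 : (closedNbhd G v \ {u, v}).ncard = 1 := by
        rw [Set.ncard_diff hpv (Set.toFinite _), Set.ncard_pair hadj.ne,
          ncard_closedNbhd, hv2]
      have h5 := Set.ncard_union_le (closedNbhd G u \ closedNbhd G v)
        (closedNbhd G v \ closedNbhd G u)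
      omega
    · -- triangle condition
      intro a b c hab hbc hac
      exact (hdis a b hab.ne).trans
        (Set.ncard_le_ncard (hsub a b) (Set.toFinite _))
  · rintro ⟨htf, hdeg, h3, h4⟩
    refine ⟨Set.univ, ?_, ?_⟩
    · intro v
      rw [Set.inter_univ, ncard_closedNbhd]
      have := hdeg v
      omega
    · intro u v huv
      rw [Set.inter_univ, Set.inter_univ]
      by_cases hadj : G.Adj u v
      · by_cases hc : ∃ c, G.Adj u c ∧ G.Adj v c
        · obtain ⟨c, huc, hvc⟩ := hc
          exact h4 u v c hadj hvc huc
        · have hint : closedNbhd G u ∩ closedNbhd G v = {u, v} := by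
            apply Set.Subset.antisymm _ (pair_subset_closedNbhd hadj)
            rintro x ⟨h1, h2⟩
            rcases mem_closedNbhd.mp h1 with rfl | h1'
            · exact Or.inl rfl
            rcases mem_closedNbhd.mp h2 with rfl | h2'
            · exact Or.inr rfl
            exact absurd ⟨x, h1', h2'⟩ hc
          have hdu : (closedNbhd G u \ closedNbhd G v).ncard
              = (G.neighborSet u).ncard - 1 := by
            rw [← Set.diff_self_inter, hint,
              Set.ncard_diff ((pair_subset_closedNbhd hadj).trans Set.inter_subset_left)
                (Set.toFinite _),
              Set.ncard_pair hadj.ne, ncard_closedNbhd]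
            omega
          have hdv : (closedNbhd G v \ closedNbhd G u).ncard
              = (G.neighborSet v).ncard - 1 := by
            rw [← Set.diff_self_inter, Set.inter_comm, hint,
              Set.ncard_diff ((pair_subset_closedNbhd hadj).trans Set.inter_subset_right)
                (Set.toFinite _),
              Set.ncard_pair hadj.ne, ncard_closedNbhd]
            omega
          rw [Set.symmDiff_def,
            Set.ncard_union_eq disjoint_sdiff_sdiff (Set.toFinite _) (Set.toFinite _),
            hdu, hdv]
          have hu := hdeg u
          have hv := hdeg v
          have hne := h3 u v hadj
          omega
      · have hu : u ∈ symmDiff (closedNbhd G u) (closedNbhd G v) := by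
          rw [Set.mem_symmDiff]
          left
          refine ⟨mem_closedNbhd.mpr (Or.inl rfl), ?_⟩
          rw [mem_closedNbhd]
          rintro (rfl | h)
          · exact huv rfl
          · exact hadj h.symm
        have hv : v ∈ symmDiff (closedNbhd G u) (closedNbhd G v) := by
          rw [Set.mem_symmDiff]
          right
          refine ⟨mem_closedNbhd.mpr (Or.inl rfl), ?_⟩
          rw [mem_closedNbhd]
          rintro (rfl | h)
          · exact huv rfl
          · exact hadj h
        have hns : ¬ symmDiff (closedNbhd G u) (closedNbhd G v) ⊆ {u, v} := by
          intro hsub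
          apply (htf u v huv).2
          ext x
          simp only [SimpleGraph.mem_neighborSet]
          have key : ∀ a b : V, ¬ G.Adj a b → a ≠ b →
              (∀ y ∈ symmDiff (closedNbhd G a) (closedNbhd G b), y ∈ ({a, b} : Set V)) →
              ∀ x, G.Adj a x → G.Adj b x := by
            intro a b hab hne hs x hax
            have hxa : x ≠ a := hax.ne'
            have hxb : x ≠ b := by
              rintro rfl
              exact hab hax
            have hxNa : x ∈ closedNbhd G a := mem_closedNbhd.mpr (Or.inr hax)
            by_contra hbx
            have hxNb : x ∉ closedNbhd G b := by
              rw [mem_closedNbhd]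
              rintro (rfl | h)
              · exact hxb rfl
              · exact hbx h
            have : x ∈ ({a, b} : Set V) :=
              hs x (Set.mem_symmDiff.mpr (Or.inl ⟨hxNa, hxNb⟩))
            rcases this with rfl | rfl
            · exact hxa rfl
            · exact hxb rfl
          constructor
          · exact key u v hadj huv (fun y hy => hsub hy) x
          · refine key v u (fun h => hadj h.symm) huv.symm ?_ x
            intro y hy
            rw [symmDiff_comm] at hy
            rcases hsub hy with rfl | rfl
            · exact Or.inr rfl
            · exact Or.inl rfl
        obtain ⟨w, hw, hwuv⟩ := Set.not_subset.mp hns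
        have hwu : w ≠ u := fun h => hwuv (h ▸ Or.inl rfl)
        have hwv : w ≠ v := fun h => hwuv (h ▸ Or.inr rfl)
        have hsub3 : ({u, v, w} : Set V) ⊆
            symmDiff (closedNbhd G u) (closedNbhd G v) := by
          rintro x (rfl | rfl | rfl)
          · exact hu
          · exact hv
          · exact hw
        have h3c : ({u, v, w} : Set V).ncard = 3 := by
          rw [Set.ncard_insert_of_notMem (by simp [huv, hwu.symm]) (Set.toFinite _),
            Set.ncard_pair hwv.symm]
        rw [← h3c]
        exact Set.ncard_le_ncard hsub3 (Set.toFinite _)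
end

section
/- No cycle graph C_n (n ≥ 3) admits an error-correcting identifying code. -/
open SimpleGraph

variable {V : Type*}

lemma closedNbhd_cycle {m : ℕ} (v : Fin (m + 3)) :
    closedNbhd (SimpleGraph.cycleGraph (m + 3)) v = {v - 1, v, v + 1} := by
  have : (m + 3) = (m + 1) + 2 := by ring
  rw [closedNbhd]
  rw [show (SimpleGraph.cycleGraph (m+3)).neighborSet v = {v - 1, v + 1} from
    cycleGraph_neighborSet (n := m + 1) (v := v)]
  ext x
  simp [Set.mem_insert_iff]
  tauto

theorem stmt6 (n : ℕ) (hn : 3 ≤ n) :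
    ¬∃ S : Set (Fin n), IsErrIC (SimpleGraph.cycleGraph n) S := by
  obtain ⟨m, rfl⟩ : ∃ m, n = m + 3 := ⟨n - 3, by omega⟩
  rintro ⟨S, hdom, hdis⟩
  -- each closed neighborhood has ncard ≤ 3
  have hsub : ∀ v : Fin (m + 3),
      closedNbhd (SimpleGraph.cycleGraph (m + 3)) v ∩ S
        = closedNbhd (SimpleGraph.cycleGraph (m + 3)) v := by
    intro v
    apply Set.eq_of_subset_of_ncard_le Set.inter_subset_left
    · calc (closedNbhd (SimpleGraph.cycleGraph (m + 3)) v).ncard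
          ≤ 3 := by
            rw [closedNbhd_cycle]
            calc ({v - 1, v, v + 1} : Set (Fin (m+3))).ncard
                ≤ ({v, v + 1} : Set (Fin (m+3))).ncard + 1 := Set.ncard_insert_le _ _
              _ ≤ (({v + 1} : Set (Fin (m+3))).ncard + 1) + 1 := by
                  exact Nat.add_le_add_right (Set.ncard_insert_le _ _) 1
              _ ≤ 3 := by rw [Set.ncard_singleton]
        _ ≤ _ := hdom v
  have key := hdis 0 1 zero_ne_one
  rw [hsub 0, hsub 1, closedNbhd_cycle, closedNbhd_cycle] at key
  have hss : symmDiff ({(0:Fin (m+3)) - 1, 0, 0 + 1} : Set (Fin (m+3)))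
      ({(1:Fin (m+3)) - 1, 1, 1 + 1} : Set (Fin (m+3))) ⊆ {(0:Fin (m+3)) - 1, 1 + 1} := by
    intro x hx
    rw [Set.mem_symmDiff] at hx
    have h01 : (0:Fin (m+3)) + 1 = 1 := zero_add 1
    have h10 : (1:Fin (m+3)) - 1 = 0 := sub_self 1
    rcases hx with ⟨h1, h2⟩ | ⟨h1, h2⟩ <;>
      simp only [Set.mem_insert_iff, Set.mem_singleton_iff, h01, h10] at * <;> tauto
  have hle : (symmDiff ({(0:Fin (m+3)) - 1, 0, 0 + 1} : Set (Fin (m+3)))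
      ({(1:Fin (m+3)) - 1, 1, 1 + 1} : Set (Fin (m+3)))).ncard ≤ 2 := by
    calc _ ≤ ({(0:Fin (m+3)) - 1, 1 + 1} : Set (Fin (m+3))).ncard :=
          Set.ncard_le_ncard hss (Set.toFinite _)
      _ ≤ ({(1:Fin (m+3)) + 1} : Set (Fin (m+3))).ncard + 1 := Set.ncard_insert_le _ _
      _ ≤ 2 := by rw [Set.ncard_singleton]
  omega
end

section
/- No tree admits an error-correcting identifying code. -/
open SimpleGraph

variable {V : Type*}

theorem stmt7 [Fintype V] [Nonempty V] (G : SimpleGraph V) (hG : G.IsTree) :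
    ¬∃ S : Set V, IsErrIC G S := by
  classical
  rintro ⟨S, hdom, -⟩
  -- there is a vertex of degree ≤ 1
  obtain ⟨v, hv⟩ : ∃ v : V, G.degree v ≤ 1 := by
    by_contra h
    push_neg at h
    have hsum : ∑ v : V, G.degree v = 2 * G.edgeFinset.card :=
      G.sum_degrees_eq_twice_card_edges
    have hcard : G.edgeFinset.card + 1 = Fintype.card V := hG.card_edgeFinset
    have h2 : 2 * Fintype.card V ≤ ∑ v : V, G.degree v := by
      calc 2 * Fintype.card V = ∑ _v : V, 2 := by
            rw [Finset.sum_const, smul_eq_mul, mul_comm]; rfl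
        _ ≤ ∑ v : V, G.degree v := Finset.sum_le_sum fun v _ => h v
    omega
  have hsub : closedNbhd G v ∩ S ⊆ closedNbhd G v := Set.inter_subset_left
  have hfin : (closedNbhd G v).Finite := Set.toFinite _
  have hle : (closedNbhd G v ∩ S).ncard ≤ (closedNbhd G v).ncard :=
    Set.ncard_le_ncard hsub hfin
  have hcn : (closedNbhd G v).ncard ≤ 2 := by
    have h1 : (closedNbhd G v).ncard ≤ (G.neighborSet v).ncard + 1 := by
      simpa [closedNbhd] using Set.ncard_insert_le v (G.neighborSet v)
    have h2 : (G.neighborSet v).ncard = G.degree v := by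
      rw [← G.card_neighborFinset_eq_degree, SimpleGraph.neighborFinset_def,
        Set.ncard_eq_toFinset_card']
    omega
  have := hdom v
  omega
end

section
/- A cubic (3-regular) graph G has an error-correcting identifying code if and only if G is twin-free and triangle-free. -/
open SimpleGraph

variable {V : Type*}

lemma closedNbhd_ncard [Fintype V] (G : SimpleGraph V)
    (hreg : ∀ v : V, (G.neighborSet v).ncard = 3) (v : V) :
    (closedNbhd G v).ncard = 4 := by
  rw [closedNbhd, Set.ncard_insert_of_notMem (G.notMem_neighborSet_self), hreg]

theorem stmt9 [Fintype V] (G : SimpleGraph V)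
    (hreg : ∀ v : V, (G.neighborSet v).ncard = 3) :
    (∃ S : Set V, IsErrIC G S) ↔ (TwinFree G ∧ G.CliqueFree 3) := by
  classical
  constructor
  · rintro ⟨S, h1, h2⟩
    constructor
    · -- TwinFree
      intro u v huv
      constructor
      · intro heq
        have := h2 u v huv
        rw [heq, symmDiff_self] at this
        simp at this
      · intro heq
        have hsub : symmDiff (closedNbhd G u ∩ S) (closedNbhd G v ∩ S) ⊆ ({u, v} : Set V) := by
          refine (symmDiff_inter_subset _ _ _).trans ?_
          intro x hx
          rcases hx with ⟨hA, hnB⟩ | ⟨hB, hnA⟩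
          · rcases hA with rfl | hx
            · exact Or.inl rfl
            · rw [heq] at hx
              exact absurd (Or.inr hx) hnB
          · rcases hB with rfl | hx
            · exact Or.inr rfl
            · rw [← heq] at hx
              exact absurd (Or.inr hx) hnA
        have hle : (symmDiff (closedNbhd G u ∩ S) (closedNbhd G v ∩ S)).ncard ≤ 2 := by
          calc _ ≤ ({u, v} : Set V).ncard := Set.ncard_le_ncard hsub
          _ ≤ 2 := by
            refine (Set.ncard_insert_le _ _).trans ?_
            simp
        have := h2 u v huv
        omega
    · -- CliqueFree
      intro t ht
      rw [is3Clique_iff] at ht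
      obtain ⟨a, b, c, hab, hac, hbc, -⟩ := ht
      have habne := hab.ne
      have hacne := hac.ne
      have hbcne := hbc.ne
      have hT : ({a, b, c} : Set V).ncard = 3 := by
        rw [Set.ncard_insert_of_notMem (by simp [habne, hacne]),
          Set.ncard_insert_of_notMem (by simp [hbcne]), Set.ncard_singleton]
      have hTa : ({a, b, c} : Set V) ⊆ closedNbhd G a := by
        intro x hx
        rcases hx with rfl | rfl | rfl
        · exact Or.inl rfl
        · exact Or.inr hab
        · exact Or.inr hac
      have hTb : ({a, b, c} : Set V) ⊆ closedNbhd G b := by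
        intro x hx
        rcases hx with rfl | rfl | rfl
        · exact Or.inr hab.symm
        · exact Or.inl rfl
        · exact Or.inr hbc
      have hda : (closedNbhd G a \ {a, b, c}).ncard = 1 := by
        rw [Set.ncard_diff hTa, closedNbhd_ncard G hreg, hT]
      have hdb : (closedNbhd G b \ {a, b, c}).ncard = 1 := by
        rw [Set.ncard_diff hTb, closedNbhd_ncard G hreg, hT]
      have hsub : symmDiff (closedNbhd G a ∩ S) (closedNbhd G b ∩ S) ⊆
          (closedNbhd G a \ {a, b, c}) ∪ (closedNbhd G b \ {a, b, c}) := by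
        refine (symmDiff_inter_subset _ _ _).trans ?_
        intro x hx
        rcases hx with ⟨hA, hnB⟩ | ⟨hB, hnA⟩
        · exact Or.inl ⟨hA, fun h => hnB (hTb h)⟩
        · exact Or.inr ⟨hB, fun h => hnA (hTa h)⟩
      have hle : (symmDiff (closedNbhd G a ∩ S) (closedNbhd G b ∩ S)).ncard ≤ 2 := by
        calc _ ≤ _ := Set.ncard_le_ncard hsub
        _ ≤ (closedNbhd G a \ {a, b, c}).ncard + (closedNbhd G b \ {a, b, c}).ncard :=
            Set.ncard_union_le _ _
        _ ≤ 2 := by rw [hda, hdb]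
      have := h2 a b habne
      omega
  · rintro ⟨htf, hcf⟩
    refine ⟨Set.univ, ?_, ?_⟩
    · intro v
      rw [Set.inter_univ, closedNbhd_ncard G hreg]
      omega
    · intro u v huv
      rw [Set.inter_univ, Set.inter_univ]
      -- key: (closedNbhd G u ∩ closedNbhd G v).ncard ≤ 2
      have hkey : (closedNbhd G u ∩ closedNbhd G v).ncard ≤ 2 := by
        by_cases hadj : G.Adj u v
        · have hsub : closedNbhd G u ∩ closedNbhd G v ⊆ ({u, v} : Set V) := by
            rintro x ⟨hxu, hxv⟩
            rcases hxu with rfl | hxu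
            · exact Or.inl rfl
            rcases hxv with rfl | hxv
            · exact Or.inr rfl
            exfalso
            exact hcf {u, v, x} (is3Clique_triple_iff.2 ⟨hadj, hxu, hxv⟩)
          calc _ ≤ ({u, v} : Set V).ncard := Set.ncard_le_ncard hsub
          _ ≤ 2 := by
            refine (Set.ncard_insert_le _ _).trans ?_
            simp
        · have hsub : closedNbhd G u ∩ closedNbhd G v ⊆ G.neighborSet u ∩ G.neighborSet v := by
            rintro x ⟨hxu, hxv⟩
            rcases hxu with rfl | hxu
            · rcases hxv with rfl | hxv
              · exact absurd rfl huv
              · exact absurd hxv.symm hadj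
            rcases hxv with rfl | hxv
            · exact absurd hxu hadj
            exact ⟨hxu, hxv⟩
          have hne : (G.neighborSet u ∩ G.neighborSet v).ncard ≠ 3 := by
            intro h3
            have h1 : G.neighborSet u ∩ G.neighborSet v = G.neighborSet u :=
              Set.eq_of_subset_of_ncard_le Set.inter_subset_left (by rw [h3, hreg])
            have h2' : G.neighborSet u ∩ G.neighborSet v = G.neighborSet v :=
              Set.eq_of_subset_of_ncard_le Set.inter_subset_right (by rw [h3, hreg])
            exact (htf u v huv).2 (h1 ▸ h2')
          have hle3 : (G.neighborSet u ∩ G.neighborSet v).ncard ≤ 3 := by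
            rw [← hreg u]
            exact Set.ncard_le_ncard Set.inter_subset_left
          have := Set.ncard_le_ncard hsub (Set.toFinite _)
          omega
      have hd1 : 2 ≤ (closedNbhd G u \ closedNbhd G v).ncard := by
        have : closedNbhd G u \ closedNbhd G v =
            closedNbhd G u \ (closedNbhd G u ∩ closedNbhd G v) :=
          Set.diff_self_inter.symm
        rw [this, Set.ncard_diff Set.inter_subset_left, closedNbhd_ncard G hreg]
        omega
      have hd2 : 2 ≤ (closedNbhd G v \ closedNbhd G u).ncard := by
        have : closedNbhd G v \ closedNbhd G u =
            closedNbhd G v \ (closedNbhd G u ∩ closedNbhd G v) :=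
          Set.diff_inter_self_eq_diff.symm
        rw [this, Set.ncard_diff Set.inter_subset_right, closedNbhd_ncard G hreg]
        omega
      rw [Set.symmDiff_def, Set.ncard_union_eq disjoint_sdiff_sdiff]
      omega
end

section
/- If G is a k-regular graph with k ≥ 2 admitting an error-detecting identifying code, then S = V(G) is an error-correcting identifying code: every vertex has |N[v]| ≥ 3 and every pair of distinct vertices u,v has |N[u] △ N[v]| ≥ 3 (in fact ≥ 4). -/
open SimpleGraph

variable {V : Type*}

/-- `S` is an error-detecting identifying code for `G`. -/
def IsDetIC (G : SimpleGraph V) (S : Set V) : Prop :=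
  (∀ v : V, 2 ≤ (closedNbhd G v ∩ S).ncard) ∧
  ∀ u v : V, u ≠ v →
    2 ≤ ((closedNbhd G u ∩ S) \ (closedNbhd G v ∩ S)).ncard ∨
    2 ≤ ((closedNbhd G v ∩ S) \ (closedNbhd G u ∩ S)).ncard

theorem stmt12 [Fintype V] (G : SimpleGraph V) (k : ℕ) (hk : 2 ≤ k)
    (hreg : ∀ v : V, (G.neighborSet v).ncard = k)
    (h : ∃ S : Set V, IsDetIC G S) :
    IsErrIC G Set.univ ∧
    ∀ u v : V, u ≠ v → 4 ≤ (symmDiff (closedNbhd G u) (closedNbhd G v)).ncard := by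

  obtain ⟨S, hS1, hS2⟩ := h
  have hfin : ∀ s : Set V, s.Finite := fun s => s.toFinite
  have hcard : ∀ v, (closedNbhd G v).ncard = k + 1 := by
    intro v
    rw [closedNbhd, Set.ncard_insert_of_notMem (G.notMem_neighborSet_self) (hfin _), hreg]
  have key : ∀ u v : V, u ≠ v → 2 ≤ (closedNbhd G u \ closedNbhd G v).ncard ∧
      2 ≤ (closedNbhd G v \ closedNbhd G u).ncard := by
    intro u v huv
    have h1 := Set.ncard_inter_add_ncard_diff_eq_ncard (closedNbhd G u) (closedNbhd G v) (hfin _)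
    have h2 := Set.ncard_inter_add_ncard_diff_eq_ncard (closedNbhd G v) (closedNbhd G u) (hfin _)
    rw [Set.inter_comm, hcard] at h2
    rw [hcard] at h1
    have hsub : ∀ a b : V, (closedNbhd G a ∩ S) \ (closedNbhd G b ∩ S) ⊆
        closedNbhd G a \ closedNbhd G b := by
      intro a b x hx
      exact ⟨hx.1.1, fun hb => hx.2 ⟨hb, hx.1.2⟩⟩
    rcases hS2 u v huv with hle | hle
    · have := hle.trans (Set.ncard_le_ncard (hsub u v) (hfin _))
      omega
    · have := hle.trans (Set.ncard_le_ncard (hsub v u) (hfin _))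
      omega
  have key4 : ∀ u v : V, u ≠ v → 4 ≤ (symmDiff (closedNbhd G u) (closedNbhd G v)).ncard := by
    intro u v huv
    obtain ⟨ha, hb⟩ := key u v huv
    have : symmDiff (closedNbhd G u) (closedNbhd G v) =
        (closedNbhd G u \ closedNbhd G v) ∪ (closedNbhd G v \ closedNbhd G u) := by
      rw [Set.symmDiff_def]
    rw [this, Set.ncard_union_eq disjoint_sdiff_sdiff (hfin _) (hfin _)]
    omega
  refine ⟨⟨fun v => ?_, fun u v huv => ?_⟩, key4⟩
  · rw [Set.inter_univ, hcard]; omega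
  · rw [Set.inter_univ, Set.inter_univ]
    have := key4 u v huv
    omega
end

section
/- Let G be a cubic graph, S an error-correcting identifying code for G, and v a vertex not in S. Then every vertex u ≠ v with d(u,v) ≤ 3 belongs to S. -/
open SimpleGraph

variable {V : Type*}

lemma nbhd_finite (G : SimpleGraph V) (hreg : ∀ v : V, (G.neighborSet v).ncard = 3)
    (w : V) : (G.neighborSet w).Finite := by
  by_contra h
  have : (G.neighborSet w).ncard = 0 := Set.Infinite.ncard h
  rw [hreg] at this
  omega

lemma mem_closedNbhd_self (G : SimpleGraph V) (v : V) : v ∈ closedNbhd G v :=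
  Set.mem_insert _ _

lemma mem_closedNbhd_of_adj {G : SimpleGraph V} {w x : V} (h : G.Adj w x) :
    x ∈ closedNbhd G w :=
  Set.mem_insert_of_mem _ h

/-- Two distinct vertices outside `S` cannot both lie in a closed neighborhood. -/
lemma twoOut (G : SimpleGraph V) (hreg : ∀ v : V, (G.neighborSet v).ncard = 3)
    (S : Set V) (hS : IsErrIC G S) {w a b : V} (hab : a ≠ b)
    (ha : a ∈ closedNbhd G w) (hb : b ∈ closedNbhd G w)
    (haS : a ∉ S) (hbS : b ∉ S) : False := by
  have hNfin := nbhd_finite G hreg w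
  have hCfin : (closedNbhd G w).Finite := hNfin.insert w
  have hCcard : (closedNbhd G w).ncard = 4 := by
    rw [closedNbhd, Set.ncard_insert_of_notMem (by simp) hNfin, hreg]
  have hsub : closedNbhd G w ∩ S ⊆ closedNbhd G w \ {a, b} := by
    rintro x ⟨hx, hxS⟩
    refine ⟨hx, ?_⟩
    rintro (rfl | rfl) <;> [exact haS hxS; exact hbS hxS]
  have hpair : ({a, b} : Set V) ⊆ closedNbhd G w := by
    rintro x (rfl | rfl) <;> assumption
  have hdcard : (closedNbhd G w \ {a, b}).ncard = 2 := by
    rw [Set.ncard_diff hpair ((Set.finite_singleton _).insert _), hCcard, Set.ncard_pair hab]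
  have hle := Set.ncard_le_ncard hsub hCfin.diff
  have h3 := hS.1 w
  omega

lemma adj_mem (G : SimpleGraph V) (hreg : ∀ v : V, (G.neighborSet v).ncard = 3)
    (S : Set V) (hS : IsErrIC G S) {v u : V} (hv : v ∉ S) (h : G.Adj v u) : u ∈ S := by
  by_contra hu
  exact twoOut G hreg S hS (G.ne_of_adj h).symm
    (Set.mem_insert_of_mem _ h) (Set.mem_insert _ _) hu hv

/-- No two distinct non-code vertices at distance ≤ 2. -/
lemma dist2 (G : SimpleGraph V) (hreg : ∀ v : V, (G.neighborSet v).ncard = 3)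
    (S : Set V) (hS : IsErrIC G S) {u a v : V} (huv : u ≠ v)
    (h1 : G.Adj a u) (h2 : G.Adj a v) (hu : u ∉ S) (hv : v ∉ S) : False :=
  twoOut G hreg S hS huv (Set.mem_insert_of_mem _ h1) (Set.mem_insert_of_mem _ h2) hu hv

lemma dist3 (G : SimpleGraph V) (hreg : ∀ v : V, (G.neighborSet v).ncard = 3)
    (S : Set V) (hS : IsErrIC G S) {u a b v : V} (huv : u ≠ v)
    (h1 : G.Adj u a) (h2 : G.Adj a b) (h3 : G.Adj b v)
    (hu : u ∉ S) (hv : v ∉ S) : False := by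
  rcases eq_or_ne a v with rfl | hav
  · exact hu (adj_mem G hreg S hS hv h1.symm)
  rcases eq_or_ne b u with rfl | hbu
  · exact hu (adj_mem G hreg S hS hv h3.symm)
  -- a, b are both in S
  have haS : a ∈ S := adj_mem G hreg S hS hu h1
  have hbS : b ∈ S := adj_mem G hreg S hS hv h3.symm
  have hab : a ≠ b := G.ne_of_adj h2
  -- symmetric difference of codes of b and a is small
  have hkey := hS.2 b a hab.symm
  have hsub : symmDiff (closedNbhd G b ∩ S) (closedNbhd G a ∩ S) ⊆
      (G.neighborSet b \ {v, a}) ∪ (G.neighborSet a \ {b, u}) := by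
    intro x hx
    rw [Set.mem_symmDiff] at hx
    rcases hx with ⟨⟨hxb, hxS⟩, hxna⟩ | ⟨⟨hxa, hxS⟩, hxnb⟩
    · left
      rcases hxb with rfl | hxb
      · exact absurd ⟨mem_closedNbhd_of_adj h2, hxS⟩ hxna
      refine ⟨hxb, ?_⟩
      rintro (rfl | rfl)
      · exact hv hxS
      · exact hxna ⟨mem_closedNbhd_self G x, hxS⟩
    · right
      rcases hxa with rfl | hxa
      · exact absurd ⟨mem_closedNbhd_of_adj h2.symm, hxS⟩ hxnb
      refine ⟨hxa, ?_⟩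
      rintro (rfl | rfl)
      · exact hxnb ⟨mem_closedNbhd_self G x, hxS⟩
      · exact hu hxS
  have hbfin := nbhd_finite G hreg b
  have hafin := nbhd_finite G hreg a
  have hcard1 : (G.neighborSet b \ {v, a}).ncard = 1 := by
    have hpair : ({v, a} : Set V) ⊆ G.neighborSet b := by
      rintro x (rfl | rfl)
      · exact h3
      · exact h2.symm
    rw [Set.ncard_diff hpair ((Set.finite_singleton _).insert _), hreg, Set.ncard_pair hav.symm]
  have hcard2 : (G.neighborSet a \ {b, u}).ncard = 1 := by
    have hpair : ({b, u} : Set V) ⊆ G.neighborSet a := by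
      rintro x (rfl | rfl)
      · exact h2
      · exact h1.symm
    rw [Set.ncard_diff hpair ((Set.finite_singleton _).insert _), hreg, Set.ncard_pair hbu]
  have hfin : ((G.neighborSet b \ {v, a}) ∪ (G.neighborSet a \ {b, u})).Finite :=
    hbfin.diff.union hafin.diff
  have hle := Set.ncard_le_ncard hsub hfin
  have hunion := Set.ncard_union_le (G.neighborSet b \ {v, a}) (G.neighborSet a \ {b, u})
  omega

theorem stmt13 (G : SimpleGraph V)
    (hreg : ∀ v : V, (G.neighborSet v).ncard = 3)
    (S : Set V) (hS : IsErrIC G S) (v : V) (hv : v ∉ S) :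
    ∀ u : V, u ≠ v → G.edist u v ≤ 3 → u ∈ S := by
  intro u huv hd
  have hne : G.edist u v ≠ ⊤ := by
    intro h
    rw [h] at hd
    exact absurd hd (by simp)
  obtain ⟨p, hp⟩ := G.exists_walk_of_edist_ne_top hne
  have hlen : p.length ≤ 3 := by
    have : (p.length : ℕ∞) ≤ 3 := hp ▸ hd
    exact_mod_cast this
  by_contra hu
  cases p with
  | nil => exact huv rfl
  | cons h1 q =>
    cases q with
    | nil => exact hu (adj_mem G hreg S hS hv h1.symm)
    | cons h2 r =>
      cases r with
      | nil => exact dist2 G hreg S hS huv h1.symm h2 hu hv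
      | cons h3 s =>
        cases s with
        | nil => exact dist3 G hreg S hS huv h1 h2 h3 hu hv
        | cons h4 t => simp [SimpleGraph.Walk.length_cons] at hlen; omega
end

section
/- If G is a twin-free, triangle-free cubic graph and v ∈ V(G), then S = V(G) − {v} is an error-correcting identifying code for G. -/
open SimpleGraph

variable {V : Type*}

lemma nbhd_fin (G : SimpleGraph V) (hreg : ∀ v : V, (G.neighborSet v).ncard = 3) (u : V) :
    (G.neighborSet u).Finite := by
  by_contra h
  have h' : (G.neighborSet u).Infinite := h
  have := h'.ncard
  rw [hreg u] at this
  omega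

lemma closed_fin (G : SimpleGraph V) (hreg : ∀ v : V, (G.neighborSet v).ncard = 3) (u : V) :
    (closedNbhd G u).Finite := (nbhd_fin G hreg u).insert u

lemma closed_ncard (G : SimpleGraph V) (hreg : ∀ v : V, (G.neighborSet v).ncard = 3) (u : V) :
    (closedNbhd G u).ncard = 4 := by
  rw [closedNbhd, Set.ncard_insert_of_notMem (by simp) (nbhd_fin G hreg u), hreg u]

lemma inter_le_two (G : SimpleGraph V) (hreg : ∀ v : V, (G.neighborSet v).ncard = 3)
    (htwin : TwinFree G) (htri : G.CliqueFree 3) {u w : V} (huw : u ≠ w) :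
    (closedNbhd G u ∩ closedNbhd G w).ncard ≤ 2 := by
  classical
  by_cases hadj : G.Adj u w
  · have heq : closedNbhd G u ∩ closedNbhd G w = {u, w} := by
      ext x
      simp only [closedNbhd, Set.mem_inter_iff, Set.mem_insert_iff, mem_neighborSet,
        Set.mem_singleton_iff]
      constructor
      · rintro ⟨(rfl | hux), (rfl | hwx)⟩
        · exact Or.inl rfl
        · exact Or.inl rfl
        · exact Or.inr rfl
        · exact absurd (is3Clique_triple_iff.mpr ⟨hadj, hux, hwx⟩) (htri {u, w, x})
      · rintro (rfl | rfl)
        · exact ⟨Or.inl rfl, Or.inr hadj.symm⟩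
        · exact ⟨Or.inr hadj, Or.inl rfl⟩
    rw [heq]
    exact (Set.ncard_insert_le _ _).trans (by simp)
  · have hsub : closedNbhd G u ∩ closedNbhd G w ⊆ G.neighborSet u ∩ G.neighborSet w := by
      rintro x ⟨hx1, hx2⟩
      rcases hx1 with rfl | hx1
      · rcases hx2 with rfl | hx2
        · exact absurd rfl huw
        · exact absurd hx2.symm hadj
      · rcases hx2 with rfl | hx2
        · exact absurd hx1 hadj
        · exact ⟨hx1, hx2⟩
    by_contra hle
    push_neg at hle
    have h3 : 3 ≤ (G.neighborSet u ∩ G.neighborSet w).ncard :=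
      hle.trans_le (Set.ncard_le_ncard hsub ((nbhd_fin G hreg u).inter_of_left _))
    have heq1 : G.neighborSet u ∩ G.neighborSet w = G.neighborSet u :=
      Set.eq_of_subset_of_ncard_le Set.inter_subset_left (by rw [hreg u]; exact h3)
        (nbhd_fin G hreg u)
    have heq2 : G.neighborSet u ∩ G.neighborSet w = G.neighborSet w :=
      Set.eq_of_subset_of_ncard_le Set.inter_subset_right (by rw [hreg w]; exact h3)
        (nbhd_fin G hreg w)
    exact (htwin u w huw).2 (heq1 ▸ heq2)

lemma symm_four (G : SimpleGraph V) (hreg : ∀ v : V, (G.neighborSet v).ncard = 3)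
    (htwin : TwinFree G) (htri : G.CliqueFree 3) {u w : V} (huw : u ≠ w) :
    4 ≤ (symmDiff (closedNbhd G u) (closedNbhd G w)).ncard := by
  have hfu := closed_fin G hreg u
  have hfw := closed_fin G hreg w
  have hint : (closedNbhd G u ∩ closedNbhd G w).ncard ≤ 2 :=
    inter_le_two G hreg htwin htri huw
  have h1 : (closedNbhd G u \ closedNbhd G w).ncard
      = (closedNbhd G u).ncard - (closedNbhd G u ∩ closedNbhd G w).ncard := by
    rw [← Set.diff_self_inter]
    exact Set.ncard_diff Set.inter_subset_left (hfu.inter_of_left _)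
  have h2 : (closedNbhd G w \ closedNbhd G u).ncard
      = (closedNbhd G w).ncard - (closedNbhd G w ∩ closedNbhd G u).ncard := by
    rw [← Set.diff_self_inter]
    exact Set.ncard_diff Set.inter_subset_left (hfw.inter_of_left _)
  rw [Set.inter_comm] at h2
  have hd : symmDiff (closedNbhd G u) (closedNbhd G w)
      = (closedNbhd G u \ closedNbhd G w) ∪ (closedNbhd G w \ closedNbhd G u) := by
    rw [Set.symmDiff_def]
  rw [hd, Set.ncard_union_eq disjoint_sdiff_sdiff hfu.diff hfw.diff, h1, h2,
    closed_ncard G hreg u, closed_ncard G hreg w]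
  omega

theorem stmt15 (G : SimpleGraph V)
    (hreg : ∀ v : V, (G.neighborSet v).ncard = 3)
    (htwin : TwinFree G) (htri : G.CliqueFree 3) (v : V) :
    IsErrIC G ({v}ᶜ : Set V) := by
  have key : ∀ (s : Set V), s.Finite → s.ncard ≤ (s ∩ {v}ᶜ).ncard + 1 := by
    intro s hs
    have hsub : s ⊆ insert v (s ∩ {v}ᶜ) := by
      intro x hx
      by_cases hxv : x = v
      · exact hxv ▸ Set.mem_insert _ _
      · exact Set.mem_insert_of_mem _ ⟨hx, hxv⟩
    calc s.ncard ≤ (insert v (s ∩ {v}ᶜ)).ncard :=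
          Set.ncard_le_ncard hsub (((hs.inter_of_left _).insert v))
      _ ≤ (s ∩ {v}ᶜ).ncard + 1 := Set.ncard_insert_le _ _
  constructor
  · intro u
    have := key (closedNbhd G u) (closed_fin G hreg u)
    rw [closed_ncard G hreg u] at this
    omega
  · intro u w huw
    have hrw : symmDiff (closedNbhd G u ∩ {v}ᶜ) (closedNbhd G w ∩ {v}ᶜ)
        = symmDiff (closedNbhd G u) (closedNbhd G w) ∩ {v}ᶜ := by
      rw [Set.inter_comm (closedNbhd G u), Set.inter_comm (closedNbhd G w),
        Set.inter_comm (symmDiff _ _)]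
      exact (Set.inter_symmDiff_distrib_left _ _ _).symm
    have hfin : (symmDiff (closedNbhd G u) (closedNbhd G w)).Finite :=
      ((closed_fin G hreg u).union (closed_fin G hreg w)).subset symmDiff_le_sup
    have h4 := symm_four G hreg htwin htri huw
    have := key _ hfin
    rw [hrw]
    omega
end

section
/- Let G be a twin-free, triangle-free cubic graph, and let S ⊆ V(G) be such that (a) any two distinct vertices of V(G)−S have distance at least 4, and (b) for any 4-cycle p a q b in G and any two vertices p', q' in (N(p) ∪ N(q)) − {p,a,q,b}, at most one of p', q' lies outside S. Then S is an error-correcting identifying code for G. -/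
open SimpleGraph

variable {V : Type*}

theorem stmt16 (G : SimpleGraph V)
    (hreg : ∀ v : V, (G.neighborSet v).ncard = 3)
    (htwin : TwinFree G) (htri : G.CliqueFree 3) (S : Set V)
    (hdist : ∀ u v : V, u ∉ S → v ∉ S → u ≠ v → 4 ≤ G.edist u v)
    (hrival : ∀ p a q b : V, G.Adj p a → G.Adj a q → G.Adj q b → G.Adj b p →
      p ≠ q → a ≠ b →
      ∀ p' q' : V, p' ∈ (G.neighborSet p ∪ G.neighborSet q) \ ({p, a, q, b} : Set V) →
        q' ∈ (G.neighborSet p ∪ G.neighborSet q) \ ({p, a, q, b} : Set V) →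
        p' ≠ q' → p' ∈ S ∨ q' ∈ S) :
    IsErrIC G S := by
  classical
  -- basic finiteness and cardinality facts
  have hNfin : ∀ v : V, (G.neighborSet v).Finite := fun v =>
    Set.finite_of_ncard_ne_zero (by rw [hreg]; norm_num)
  have hCfin : ∀ v : V, (closedNbhd G v).Finite := fun v => ((hNfin v).insert v)
  have hCcard : ∀ v : V, (closedNbhd G v).ncard = 4 := by
    intro v
    rw [closedNbhd, Set.ncard_insert_of_notMem (by simp) (hNfin v), hreg]
  -- edist helpers
  have step : ∀ {x y : V}, G.Adj x y → G.edist x y ≤ 1 := fun h =>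
    le_of_eq (edist_eq_one_iff_adj.2 h)
  have hc1 : ∀ {x y : V}, y ∈ closedNbhd G x → G.edist x y ≤ 1 := by
    intro x y hy
    rcases hy with rfl | hy
    · simp [SimpleGraph.edist_self]
    · exact step hy
  have hfalse : ∀ {x y : V}, x ∉ S → y ∉ S → x ≠ y → G.edist x y ≤ 3 → False := by
    intro x y hx hy hne hle
    have h4 := hdist x y hx hy hne
    have : (4 : ℕ∞) ≤ 3 := h4.trans hle
    norm_num at this
  have hboth : ∀ {u x y : V}, x ∈ closedNbhd G u → y ∈ closedNbhd G u →
      x ∉ S → y ∉ S → x = y := by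
    intro u x y hx hy hxS hyS
    by_contra hne
    refine hfalse hxS hyS hne ?_
    calc G.edist x y ≤ G.edist x u + G.edist u y := G.edist_triangle
    _ ≤ 1 + 1 := by
        gcongr
        · rw [SimpleGraph.edist_comm]; exact hc1 hx
        · exact hc1 hy
    _ ≤ 3 := by norm_num
  have chain3 : ∀ {x a b y : V}, G.Adj x a → G.Adj a b → G.Adj b y → G.edist x y ≤ 3 := by
    intro x a b y h1 h2 h3
    calc G.edist x y ≤ G.edist x a + G.edist a y := G.edist_triangle
    _ ≤ G.edist x a + (G.edist a b + G.edist b y) := by gcongr; exact G.edist_triangle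
    _ ≤ 1 + (1 + 1) := by gcongr <;> [exact step h1; exact step h2; exact step h3]
    _ ≤ 3 := by norm_num
  have chain2 : ∀ {x a y : V}, G.Adj x a → G.Adj a y → G.edist x y ≤ 3 := by
    intro x a y h1 h2
    calc G.edist x y ≤ G.edist x a + G.edist a y := G.edist_triangle
    _ ≤ 1 + 1 := by gcongr <;> [exact step h1; exact step h2]
    _ ≤ 3 := by norm_num
  -- triangle-free in adjacency form
  have htri' : ∀ a b c : V, G.Adj a b → G.Adj b c → G.Adj a c → False := by
    intro a b c hab hbc hac
    exact htri {a, b, c} (SimpleGraph.is3Clique_triple_iff.2 ⟨hab, hac, hbc⟩)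
  -- counting lemma
  have hcount : ∀ D : Set V, D.ncard ≤ (D ∩ S).ncard + (D \ S).ncard := by
    intro D
    conv_lhs => rw [← Set.inter_union_diff D S]
    exact Set.ncard_union_le _ _
  have hsubcard : ∀ {u : V} {T : Set V}, T ⊆ closedNbhd G u \ S → T.Subsingleton →
      T.ncard ≤ 1 := by
    intro u T hsub hT
    exact (Set.ncard_le_one (((hCfin u).diff (t := S)).subset hsub)).2 fun a ha b hb => hT ha hb
  constructor
  · -- domination
    intro v
    have hsub : (closedNbhd G v \ S).Subsingleton := fun x hx y hy =>
      hboth hx.1 hy.1 hx.2 hy.2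
    have h1 : (closedNbhd G v \ S).ncard ≤ 1 :=
      (Set.ncard_le_one ((hCfin v).diff (t := S))).2 fun a ha b hb => hsub ha hb
    have h2 := hcount (closedNbhd G v)
    rw [hCcard v] at h2
    omega
  · -- separation
    intro u v huv
    set A := closedNbhd G u with hA
    set B := closedNbhd G v with hB
    have hrw : symmDiff (A ∩ S) (B ∩ S) = symmDiff A B ∩ S := by
      ext x
      simp only [Set.mem_symmDiff, Set.mem_inter_iff, Set.mem_diff]
      tauto
    rw [hrw]
    set D := symmDiff A B with hD
    have memA : ∀ x : V, x ∈ A ↔ x = u ∨ G.Adj u x := fun x => by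
      simp [hA, closedNbhd]
    have memB : ∀ x : V, x ∈ B ↔ x = v ∨ G.Adj v x := fun x => by
      simp [hB, closedNbhd]
    have hDeq : D = (A \ B) ∪ (B \ A) := by
      ext x
      simp only [hD, Set.mem_symmDiff, Set.mem_union, Set.mem_diff]
    have hDfin : D.Finite := by
      rw [hDeq]; exact ((hCfin u).diff (t := B)).union ((hCfin v).diff (t := A))
    -- card of D via inter
    have hcardD : D.ncard + 2 * (A ∩ B).ncard = 8 := by
      have h1 : (A ∪ B).ncard + (A ∩ B).ncard = A.ncard + B.ncard :=
        Set.ncard_union_add_ncard_inter A B (hCfin u) (hCfin v)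
      have h2 : D = (A ∪ B) \ (A ∩ B) := by
        ext x; simp [hD, Set.mem_symmDiff]; tauto
      have h3 : (A ∩ B).ncard + D.ncard = (A ∪ B).ncard := by
        rw [h2]
        rw [add_comm]
        exact Set.ncard_diff_add_ncard_of_subset
          (fun x hx => Or.inl hx.1) ((hCfin u).union (hCfin v))
      rw [hCcard u, hCcard v] at h1
      omega
    -- the diff bound ≤ 2 always
    have hdiff2 : (D \ S).ncard ≤ 2 := by
      have hsub : D \ S ⊆ (A \ S) ∪ (B \ S) := by
        intro x hx
        rcases hDeq ▸ hx.1 with h | h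
        · exact Or.inl ⟨h.1, hx.2⟩
        · exact Or.inr ⟨h.1, hx.2⟩
      have h1 : (A \ S).ncard ≤ 1 :=
        (Set.ncard_le_one ((hCfin u).diff (t := S))).2 fun a ha b hb => hboth ha.1 hb.1 ha.2 hb.2
      have h2 : (B \ S).ncard ≤ 1 :=
        (Set.ncard_le_one ((hCfin v).diff (t := S))).2 fun a ha b hb => hboth ha.1 hb.1 ha.2 hb.2
      calc (D \ S).ncard ≤ ((A \ S) ∪ (B \ S)).ncard :=
            Set.ncard_le_ncard hsub (((hCfin u).diff (t := S)).union ((hCfin v).diff (t := S)))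
      _ ≤ (A \ S).ncard + (B \ S).ncard := Set.ncard_union_le _ _
      _ ≤ 2 := by omega
    have hcnt := hcount D
    by_cases hadj : G.Adj u v
    · -- adjacent case
      have hABeq : A ∩ B = {u, v} := by
        ext x
        simp only [hA, hB, closedNbhd, Set.mem_inter_iff, Set.mem_insert_iff,
          SimpleGraph.mem_neighborSet, Set.mem_singleton_iff]
        constructor
        · rintro ⟨hu | hu, hv | hv⟩
          · exact Or.inl hu
          · exact Or.inl hu
          · exact Or.inr hv
          · exact absurd hadj (fun h => htri' u v x h hv hu)
        · rintro (rfl | rfl)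
          · exact ⟨Or.inl rfl, Or.inr hadj.symm⟩
          · exact ⟨Or.inr hadj, Or.inl rfl⟩
      have hk : (A ∩ B).ncard = 2 := by rw [hABeq]; exact Set.ncard_pair huv
      have hDsub : (D \ S).Subsingleton := by
        intro x hx y hy
        by_contra hne
        have hx' := hDeq ▸ hx.1
        have hy' := hDeq ▸ hy.1
        rcases hx' with hxA | hxB <;> rcases hy' with hyA | hyB
        · exact hne (hboth hxA.1 hyA.1 hx.2 hy.2)
        · -- x ∈ A \ B, y ∈ B \ A : x ∈ N(u), y ∈ N(v)
          have hxu : G.Adj u x := by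
            rcases (memA x).1 hxA.1 with rfl | h
            · exact absurd ((memB x).2 (Or.inr hadj.symm)) hxA.2
            · exact h
          have hyv : G.Adj v y := by
            rcases (memB y).1 hyB.1 with rfl | h
            · exact absurd ((memA y).2 (Or.inr hadj)) hyB.2
            · exact h
          exact hfalse hx.2 hy.2 hne (chain3 hxu.symm hadj hyv)
        · have hxv : G.Adj v x := by
            rcases (memB x).1 hxB.1 with rfl | h
            · exact absurd ((memA x).2 (Or.inr hadj)) hxB.2
            · exact h
          have hyu : G.Adj u y := by
            rcases (memA y).1 hyA.1 with rfl | h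
            · exact absurd ((memB y).2 (Or.inr hadj.symm)) hyA.2
            · exact h
          exact hfalse hx.2 hy.2 hne (chain3 hxv.symm hadj.symm hyu)
        · exact hne (hboth hxB.1 hyB.1 hx.2 hy.2)
      have hd1 : (D \ S).ncard ≤ 1 :=
        (Set.ncard_le_one (hDfin.diff (t := S))).2 fun a ha b hb => hDsub ha hb
      omega
    · -- non-adjacent case
      set C := G.neighborSet u ∩ G.neighborSet v with hC
      have hABeq : A ∩ B = C := by
        ext x
        constructor
        · rintro ⟨h1, h2⟩
          rcases (memA x).1 h1 with rfl | hu
          · rcases (memB x).1 h2 with rfl | hv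
            · exact absurd rfl huv
            · exact absurd hv.symm hadj
          · rcases (memB x).1 h2 with rfl | hv
            · exact absurd hu hadj
            · exact ⟨hu, hv⟩
        · rintro ⟨h1, h2⟩
          exact ⟨(memA x).2 (Or.inr h1), (memB x).2 (Or.inr h2)⟩
      have hCfin' : C.Finite := (hNfin u).inter_of_left _
      have hCsub : C ⊆ G.neighborSet u := Set.inter_subset_left
      have hCle : C.ncard ≤ 3 := by
        rw [← hreg u]; exact Set.ncard_le_ncard hCsub (hNfin u)
      have hCne3 : C.ncard ≠ 3 := by
        intro h3
        have hCu : C = G.neighborSet u :=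
          Set.eq_of_subset_of_ncard_le hCsub (by rw [h3, hreg u]) (hNfin u)
        have hCv : C = G.neighborSet v :=
          Set.eq_of_subset_of_ncard_le Set.inter_subset_right (by rw [h3, hreg v]) (hNfin v)
        exact (htwin u v huv).2 (hCu ▸ hCv)
      rw [hABeq] at hcardD
      by_cases hk2 : C.ncard = 2
      · -- two common neighbors: 4-cycle
        obtain ⟨a, b, hab, hCab⟩ := Set.ncard_eq_two.1 hk2
        have haC : a ∈ C := by rw [hCab]; exact Or.inl rfl
        have hbC : b ∈ C := by rw [hCab]; exact Or.inr rfl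
        have hua : G.Adj u a := haC.1
        have hva : G.Adj v a := haC.2
        have hub : G.Adj u b := hbC.1
        have hvb : G.Adj v b := hbC.2
        have hDsub : (D \ S).Subsingleton := by
          intro x hx y hy
          by_contra hne
          have hx' := hDeq ▸ hx.1
          have hy' := hDeq ▸ hy.1
          -- helper for the asymmetric cross case
          have cross : ∀ x y : V, x ∈ A \ B → y ∈ B \ A → x ∉ S → y ∉ S → x ≠ y → False := by
            intro x y hxAB hyBA hxS hyS hxy
            rcases (memA x).1 hxAB.1 with rfl | hxu
            · -- x = u
              rcases (memB y).1 hyBA.1 with rfl | hyv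
              · -- y = v : distance 2 through a
                exact hfalse hxS hyS hxy (chain2 hua hva.symm)
              · exact hfalse hxS hyS hxy (chain3 hua hva.symm hyv)
            · rcases (memB y).1 hyBA.1 with rfl | hyv
              · exact hfalse hxS hyS hxy (chain3 hxu.symm hua hva.symm)
              · -- both proper neighbors: rival condition
                have hxmem : x ∈ (G.neighborSet u ∪ G.neighborSet v) \ ({u, a, v, b} : Set V) := by
                  constructor
                  · exact Or.inl hxu
                  · simp only [Set.mem_insert_iff, Set.mem_singleton_iff]
                    push_neg
                    refine ⟨fun h => G.irrefl (h ▸ hxu),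
                      fun h => hxAB.2 ((memB x).2 (Or.inr (h ▸ hva))),
                      fun h => hxAB.2 ((memB x).2 (Or.inl h)),
                      fun h => hxAB.2 ((memB x).2 (Or.inr (h ▸ hvb)))⟩
                have hymem : y ∈ (G.neighborSet u ∪ G.neighborSet v) \ ({u, a, v, b} : Set V) := by
                  constructor
                  · exact Or.inr hyv
                  · simp only [Set.mem_insert_iff, Set.mem_singleton_iff]
                    push_neg
                    refine ⟨fun h => hyBA.2 ((memA y).2 (Or.inl h)),
                      fun h => hyBA.2 ((memA y).2 (Or.inr (h ▸ hua))),
                      fun h => G.irrefl (h ▸ hyv),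
                      fun h => hyBA.2 ((memA y).2 (Or.inr (h ▸ hub)))⟩
                rcases hrival u a v b hua hva.symm hvb hub.symm huv hab x y hxmem hymem hxy with
                  h | h
                · exact hxS h
                · exact hyS h
          rcases hx' with hxA | hxB <;> rcases hy' with hyA | hyB
          · exact hne (hboth hxA.1 hyA.1 hx.2 hy.2)
          · exact cross x y hxA hyB hx.2 hy.2 hne
          · exact cross y x hyA hxB hy.2 hx.2 (fun h => hne h.symm)
          · exact hne (hboth hxB.1 hyB.1 hx.2 hy.2)
        have hd1 : (D \ S).ncard ≤ 1 :=
          (Set.ncard_le_one (hDfin.diff (t := S))).2 fun p hp q hq => hDsub hp hq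
        omega
      · -- at most one common neighbor
        have hk1 : C.ncard ≤ 1 := by omega
        omega
end

section
/- Let S be an error-correcting identifying code in a cubic graph G and let x ∈ S be a vertex with |N[x] ∩ S| = 3 (i.e., exactly one neighbor of x is outside S). Then both neighbors of x that are in S have |N[·] ∩ S| = 4. -/
open SimpleGraph

variable {V : Type*}

theorem stmt17 (G : SimpleGraph V)
    (hreg : ∀ v : V, (G.neighborSet v).ncard = 3)
    (S : Set V) (hS : IsErrIC G S) (x : V) (hx : x ∈ S)
    (h3 : (closedNbhd G x ∩ S).ncard = 3) :
    ∀ y : V, G.Adj x y → y ∈ S → (closedNbhd G y ∩ S).ncard = 4 := by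
  intro y hxy hyS
  have hnfin : ∀ v : V, (G.neighborSet v).Finite := fun v =>
    Set.finite_of_ncard_ne_zero (by rw [hreg v]; norm_num)
  have hCfin : ∀ v : V, (closedNbhd G v).Finite := fun v =>
    (hnfin v).insert v
  have hC4 : ∀ v : V, (closedNbhd G v).ncard = 4 := by
    intro v
    have hv : v ∉ G.neighborSet v := fun h => G.irrefl h
    rw [closedNbhd, Set.ncard_insert_of_notMem hv (hnfin v), hreg v]
  set A : Set V := closedNbhd G x ∩ S with hAdef
  set B : Set V := closedNbhd G y ∩ S with hBdef
  have hAfin : A.Finite := (hCfin x).inter_of_left _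
  have hBfin : B.Finite := (hCfin y).inter_of_left _
  have hBle : B.ncard ≤ 4 := by
    rw [← hC4 y]
    exact Set.ncard_le_ncard Set.inter_subset_left (hCfin y)
  have hBge : 3 ≤ B.ncard := hS.1 y
  by_contra hne4
  have hB3 : B.ncard = 3 := by omega
  have hxney : x ≠ y := G.ne_of_adj hxy
  have hxA : x ∈ A := ⟨Set.mem_insert _ _, hx⟩
  have hyA : y ∈ A := ⟨Set.mem_insert_of_mem _ hxy, hyS⟩
  have hxB : x ∈ B := ⟨Set.mem_insert_of_mem _ hxy.symm, hx⟩
  have hyB : y ∈ B := ⟨Set.mem_insert _ _, hyS⟩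
  have hpair : ({x, y} : Set V) ⊆ A ∩ B := by
    intro z hz
    rcases hz with rfl | hz
    · exact ⟨hxA, hxB⟩
    · rcases hz with rfl
      exact ⟨hyA, hyB⟩
  have hinter2 : 2 ≤ (A ∩ B).ncard := by
    have := Set.ncard_le_ncard hpair (hAfin.inter_of_left _)
    rwa [Set.ncard_pair hxney] at this
  have hui : (A ∪ B).ncard + (A ∩ B).ncard = A.ncard + B.ncard :=
    Set.ncard_union_add_ncard_inter A B hAfin hBfin
  have hufin : (A ∪ B).Finite := hAfin.union hBfin
  have hsub : symmDiff A B ⊆ (A ∪ B) \ {x, y} := by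
    intro z hz
    rw [Set.mem_symmDiff] at hz
    constructor
    · rcases hz with ⟨h1, _⟩ | ⟨h1, _⟩
      · exact Or.inl h1
      · exact Or.inr h1
    · intro hzxy
      have : z ∈ A ∩ B := hpair hzxy
      rcases hz with ⟨_, h2⟩ | ⟨_, h2⟩
      · exact h2 this.2
      · exact h2 this.1
  have hdiff : ((A ∪ B) \ {x, y}).ncard = (A ∪ B).ncard - 2 := by
    rw [Set.ncard_diff (hpair.trans (Set.inter_subset_left.trans Set.subset_union_left)) ((Set.finite_singleton y).insert x),
      Set.ncard_pair hxney]
  have hsymm_le : (symmDiff A B).ncard ≤ (A ∪ B).ncard - 2 := by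
    rw [← hdiff]
    exact Set.ncard_le_ncard hsub hufin.diff
  have h3' := hS.2 x y hxney
  rw [← hAdef, ← hBdef] at h3'
  omega
end

section
/- If S is an error-correcting identifying code for a finite cubic graph G on n vertices, then |S| ≥ (5/6) n. -/
open SimpleGraph

variable {V : Type*}

/-- Abstract combinatorial core of the 5/6 lower bound for error-correcting
identifying codes in cubic graphs. `N u` plays the role of the closed
neighborhood of `u`, `F` of the code. -/
theorem ecid_core {V : Type*} [Fintype V] [DecidableEq V]
    (N : V → Finset V) (F : Finset V)
    (hsym : ∀ u v : V, v ∈ N u ↔ u ∈ N v)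
    (hself : ∀ u : V, u ∈ N u)
    (hcard : ∀ u : V, (N u).card = 4)
    (hdom : ∀ u : V, 3 ≤ (N u ∩ F).card)
    (hpair : ∀ u v : V, u ≠ v → (N u ∩ F).card = 3 → (N v ∩ F).card = 3 →
      ((N u ∩ F) ∩ (N v ∩ F)).card ≤ 1) :
    5 * Fintype.card V ≤ 6 * F.card := by
  classical
  set n := Fintype.card V with hn
  set c : V → ℕ := fun u => (N u ∩ F).card with hc
  have hc4 : ∀ u, c u ≤ 4 := fun u =>
    le_trans (Finset.card_le_card Finset.inter_subset_left) (le_of_eq (hcard u))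
  have hc34 : ∀ u, c u = 3 ∨ c u = 4 := fun u => by
    have h1 : 3 ≤ c u := hdom u; have h2 := hc4 u; omega
  set T : Finset V := Finset.univ.filter (fun u => c u = 3) with hT
  have hmemT : ∀ u, u ∈ T ↔ c u = 3 := by intro u; simp [hT]
  -- double counting
  have dc : ∀ A B : Finset V, ∑ u ∈ A, (N u ∩ B).card = ∑ v ∈ B, (N v ∩ A).card := by
    intro A B
    have key : ∀ (A : Finset V) (u : V),
        (N u ∩ A).card = ∑ v ∈ A, if v ∈ N u then 1 else 0 := by
      intro A u
      rw [← Finset.card_filter]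
      congr 1
      ext x
      simp [Finset.mem_filter, Finset.mem_inter, and_comm]
    simp only [key]
    rw [Finset.sum_comm]
    refine Finset.sum_congr rfl fun v _ => Finset.sum_congr rfl fun u _ => ?_
    simp [hsym u v]
  -- total count : 4|F| + |T| = 4n
  have hsumc : ∑ u : V, c u = 4 * F.card := by
    have h0 := dc Finset.univ F
    simp only [Finset.inter_univ] at h0
    show ∑ u : V, (N u ∩ F).card = 4 * F.card
    simp only [h0, hcard, Finset.sum_const, smul_eq_mul]
    ring
  have hTn : 4 * F.card + T.card = 4 * n := by
    have h1 : ∀ u : V, c u + (if u ∈ T then 1 else 0) = 4 := by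
      intro u
      rcases hc34 u with h | h <;> simp [hmemT, h]
    have h2 : ∑ u : V, (c u + (if u ∈ T then 1 else 0)) = 4 * n := by
      rw [Finset.sum_congr rfl fun u _ => h1 u]
      simp [hn, Finset.card_univ, mul_comm]
    rw [Finset.sum_add_distrib] at h2
    have h3 : (∑ u : V, if u ∈ T then 1 else 0) = T.card := by
      rw [Finset.sum_ite_mem, Finset.univ_inter, Finset.card_eq_sum_ones]
    rw [hsumc, h3] at h2
    exact h2
  -- vertices outside the code are in T
  have hnotF : ∀ q, q ∉ F → q ∈ T := by
    intro q hq
    rw [hmemT]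
    have hsub : N q ∩ F ⊆ (N q).erase q := by
      intro x hx
      rw [Finset.mem_inter] at hx
      exact Finset.mem_erase.2 ⟨fun h => hq (h ▸ hx.2), hx.1⟩
    have h1 : c q ≤ 3 := by
      have := Finset.card_le_card hsub
      rwa [Finset.card_erase_of_mem (hself q), hcard] at this
    have h2 : 3 ≤ c q := hdom q
    omega
  -- every T vertex misses some code vertex in its neighborhood
  have hmiss : ∀ a, a ∈ T → ∃ q, q ∈ N a ∧ q ∉ F := by
    intro a ha
    by_contra h
    push_neg at h
    have h1 : N a ∩ F = N a := Finset.inter_eq_left.2 h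
    have h2 : c a = 4 := by show (N a ∩ F).card = 4; rw [h1]; exact hcard a
    rw [hmemT] at ha
    omega
  -- two adjacent code vertices cannot both be in T
  have pairA : ∀ s a, s ∈ F → a ∈ F → s ∈ T → a ∈ T → s ≠ a → a ∈ N s → False := by
    intro s a hsF haF hsT haT hne hadj
    have h1 := hpair s a hne ((hmemT s).1 hsT) ((hmemT a).1 haT)
    have hs : s ∈ (N s ∩ F) ∩ (N a ∩ F) := by
      simp only [Finset.mem_inter]
      exact ⟨⟨hself s, hsF⟩, (hsym s a).1 hadj, hsF⟩
    have ha : a ∈ (N s ∩ F) ∩ (N a ∩ F) := by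
      simp only [Finset.mem_inter]
      exact ⟨⟨hadj, haF⟩, hself a, haF⟩
    have hsub : ({s, a} : Finset V) ⊆ (N s ∩ F) ∩ (N a ∩ F) := by
      intro x hx
      rcases Finset.mem_insert.1 hx with h | h
      · exact h ▸ hs
      · exact (Finset.mem_singleton.1 h) ▸ ha
    have := Finset.card_le_card hsub
    rw [Finset.card_pair hne] at this
    omega
  set t : V → ℕ := fun s => (N s ∩ T).card with ht
  -- code vertices in T have at most 2 closed neighbors in T
  have htS : ∀ s, s ∈ F → s ∈ T → t s ≤ 2 := by
    intro s hsF hsT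
    by_contra h
    push_neg at h
    have hts : 3 ≤ (N s ∩ T).card := h
    have hD : 2 ≤ ((N s ∩ T).erase s).card := by
      have h2 := Finset.pred_card_le_card_erase (s := N s ∩ T) (a := s)
      omega
    obtain ⟨a, ha, b, hb, hab⟩ := Finset.one_lt_card.1 (by omega : 1 < ((N s ∩ T).erase s).card)
    rw [Finset.mem_erase, Finset.mem_inter] at ha hb
    have haF : a ∉ F := fun haF =>
      pairA s a hsF haF hsT ha.2.2 (Ne.symm ha.1) ha.2.1
    have hbF : b ∉ F := fun hbF =>
      pairA s b hsF hbF hsT hb.2.2 (Ne.symm hb.1) hb.2.1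
    have hsub : N s ∩ F ⊆ N s \ {a, b} := by
      intro x hx
      rw [Finset.mem_inter] at hx
      rw [Finset.mem_sdiff]
      refine ⟨hx.1, fun hmem => ?_⟩
      rcases Finset.mem_insert.1 hmem with h' | h'
      · exact haF (h' ▸ hx.2)
      · exact hbF ((Finset.mem_singleton.1 h') ▸ hx.2)
    have hab' : ({a, b} : Finset V) ⊆ N s := by
      intro x hx
      rcases Finset.mem_insert.1 hx with h' | h'
      · exact h' ▸ ha.2.1
      · exact (Finset.mem_singleton.1 h') ▸ hb.2.1
    have hcs := Finset.card_le_card hsub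
    rw [Finset.card_sdiff_of_subset hab', Finset.card_pair hab, hcard] at hcs
    have hds : 3 ≤ (N s ∩ F).card := hdom s
    omega
  -- code vertices have at most 3 closed neighbors in T
  have htmax : ∀ s, s ∈ F → t s ≤ 3 := by
    intro s hsF
    by_cases hsT : s ∈ T
    · exact le_trans (htS s hsF hsT) (by norm_num)
    · have hsub : N s ∩ T ⊆ (N s).erase s := by
        intro x hx
        rw [Finset.mem_inter] at hx
        exact Finset.mem_erase.2 ⟨fun h => hsT (h ▸ hx.2), hx.1⟩
      have := Finset.card_le_card hsub
      rwa [Finset.card_erase_of_mem (hself s), hcard] at this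
  -- code vertices in T have at least 2 closed neighbors in T
  have ht2 : ∀ a, a ∈ F → a ∈ T → t a = 2 := by
    intro a haF haT
    refine le_antisymm (htS a haF haT) ?_
    obtain ⟨q, hqN, hqF⟩ := hmiss a haT
    have hqT : q ∈ T := hnotF q hqF
    have hqa : q ≠ a := fun h => hqF (h ▸ haF)
    have hsub : ({q, a} : Finset V) ⊆ N a ∩ T := by
      intro x hx
      rcases Finset.mem_insert.1 hx with h' | h'
      · subst h'; exact Finset.mem_inter.2 ⟨hqN, hqT⟩
      · rw [Finset.mem_singleton] at h'; subst h'
        exact Finset.mem_inter.2 ⟨hself x, haT⟩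
    have := Finset.card_le_card hsub
    rwa [Finset.card_pair hqa] at this
  set S3 : Finset V := F.filter (fun s => t s = 3) with hS3
  set W : Finset V := F.filter (fun a => a ∈ T ∧ t a = 2) with hW
  -- each S3 vertex has 3 neighbors in W
  have hS3W : ∀ s, s ∈ S3 → 3 ≤ (N s ∩ W).card := by
    intro s hs
    rw [hS3, Finset.mem_filter] at hs
    obtain ⟨hsF, hst⟩ := hs
    have hst' : (N s ∩ T).card = 3 := hst
    have hsT : s ∉ T := fun h => by
      have h2 : t s ≤ 2 := htS s hsF h
      have h3 : t s = 3 := hst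
      omega
    have hcs4 : c s = 4 := by
      rcases hc34 s with h | h
      · exact absurd ((hmemT s).2 h) hsT
      · exact h
    have hNF : N s ⊆ F := by
      have : N s ∩ F = N s := Finset.eq_of_subset_of_card_le Finset.inter_subset_left
        (by rw [hcard]; exact le_of_eq hcs4.symm)
      intro x hx
      rw [← this] at hx
      exact (Finset.mem_inter.1 hx).2
    have herase : N s ∩ T = (N s).erase s := by
      refine Finset.eq_of_subset_of_card_le ?_ ?_
      · intro x hx
        rw [Finset.mem_inter] at hx
        exact Finset.mem_erase.2 ⟨fun h => hsT (h ▸ hx.2), hx.1⟩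
      · rw [Finset.card_erase_of_mem (hself s), hcard]
        omega
    have hsubW : (N s).erase s ⊆ N s ∩ W := by
      intro a ha
      have haT : a ∈ T := by
        rw [← herase] at ha
        exact (Finset.mem_inter.1 ha).2
      rw [Finset.mem_erase] at ha
      have haF : a ∈ F := hNF ha.2
      refine Finset.mem_inter.2 ⟨ha.2, ?_⟩
      rw [hW, Finset.mem_filter]
      exact ⟨haF, haT, ht2 a haF haT⟩
    have := Finset.card_le_card hsubW
    rwa [Finset.card_erase_of_mem (hself s), hcard] at this
  -- each W vertex has at most 2 neighbors in S3
  have hWS3 : ∀ a, a ∈ W → (N a ∩ S3).card ≤ 2 := by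
    intro a ha
    rw [hW, Finset.mem_filter] at ha
    obtain ⟨haF, haT, hat⟩ := ha
    obtain ⟨q, hqN, hqF⟩ := hmiss a haT
    have hqa : q ≠ a := fun h => hqF (h ▸ haF)
    have hsub : N a ∩ S3 ⊆ ((N a).erase q).erase a := by
      intro x hx
      rw [Finset.mem_inter] at hx
      have hxF : x ∈ F := (Finset.mem_filter.1 hx.2).1
      have hxt : t x = 3 := (Finset.mem_filter.1 hx.2).2
      refine Finset.mem_erase.2 ⟨fun h => ?_, Finset.mem_erase.2 ⟨fun h => hqF (by rw [← h]; exact hxF), hx.1⟩⟩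
      rw [h] at hxt
      omega
    have := Finset.card_le_card hsub
    rwa [Finset.card_erase_of_mem
        (Finset.mem_erase.2 ⟨fun h => hqF (by rw [← h]; exact haF), hself a⟩),
      Finset.card_erase_of_mem hqN, hcard] at this
  -- 3|S3| ≤ 2|W|
  have hS3card : 3 * S3.card ≤ 2 * W.card := by
    have h1 := dc S3 W
    have h2 : 3 * S3.card ≤ ∑ s ∈ S3, (N s ∩ W).card := by
      have : 3 * S3.card = ∑ _s ∈ S3, 3 := by
        rw [Finset.sum_const, smul_eq_mul, mul_comm]
      rw [this]
      exact Finset.sum_le_sum fun s hs => hS3W s hs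
    have h3 : ∑ a ∈ W, (N a ∩ S3).card ≤ 2 * W.card := by
      have : 2 * W.card = ∑ _a ∈ W, 2 := by
        rw [Finset.sum_const, smul_eq_mul, mul_comm]
      rw [this]
      exact Finset.sum_le_sum fun a ha => hWS3 a ha
    omega
  -- sum of t over F equals 3|T|
  have hsumt : ∑ s ∈ F, t s = 3 * T.card := by
    have h1 := dc F T
    have h2 : ∀ u ∈ T, (N u ∩ F).card = 3 := fun u hu => (hmemT u).1 hu
    show ∑ s ∈ F, (N s ∩ T).card = 3 * T.card
    rw [h1, Finset.sum_congr rfl h2, Finset.sum_const, smul_eq_mul, mul_comm]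
  -- split the sum over S3 and the rest
  set R : Finset V := F.filter (fun s => ¬ t s = 3) with hR
  have hsplit : S3.card + R.card = F.card := Finset.card_filter_add_card_filter_not _
  have hsumsplit : ∑ s ∈ F, t s ≤ 3 * S3.card + 2 * R.card := by
    rw [← Finset.sum_filter_add_sum_filter_not F (fun s => t s = 3), ← hS3, ← hR]
    have hA : ∑ s ∈ S3, t s = 3 * S3.card := by
      rw [Finset.sum_congr rfl (fun s hs => (Finset.mem_filter.1 hs).2), Finset.sum_const,
        smul_eq_mul, mul_comm]
    have hB : ∑ s ∈ R, t s ≤ 2 * R.card := by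
      have h2R : 2 * R.card = ∑ _s ∈ R, 2 := by
        rw [Finset.sum_const, smul_eq_mul, mul_comm]
      rw [h2R]
      refine Finset.sum_le_sum fun s hs => ?_
      rw [hR, Finset.mem_filter] at hs
      have := htmax s hs.1
      omega
    omega
  have hWR : W.card ≤ R.card := by
    refine Finset.card_le_card ?_
    intro a ha
    rw [hW, Finset.mem_filter] at ha
    rw [hR, Finset.mem_filter]
    exact ⟨ha.1, by omega⟩
  omega

theorem stmt18 [Fintype V] (G : SimpleGraph V)
    (hreg : ∀ v : V, (G.neighborSet v).ncard = 3)
    (S : Set V) (hS : IsErrIC G S) :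
    (5 : ℚ) / 6 * (Fintype.card V : ℚ) ≤ (S.ncard : ℚ) := by
  classical
  set N : V → Finset V := fun u => (closedNbhd G u).toFinset with hN
  set F : Finset V := S.toFinset with hF
  have hmemN : ∀ u v : V, v ∈ N u ↔ (v = u ∨ G.Adj u v) := by
    intro u v
    simp only [hN]
    rw [Set.mem_toFinset]
    simp [closedNbhd]
  have hsym : ∀ u v : V, v ∈ N u ↔ u ∈ N v := by
    intro u v
    rw [hmemN, hmemN]
    constructor
    · rintro (h | h)
      · exact Or.inl h.symm
      · exact Or.inr h.symm
    · rintro (h | h)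
      · exact Or.inl h.symm
      · exact Or.inr h.symm
  have hself : ∀ u : V, u ∈ N u := fun u => (hmemN u u).2 (Or.inl rfl)
  have hcardN : ∀ u : V, (N u).card = 4 := by
    intro u
    rw [hN, ← Set.ncard_eq_toFinset_card']
    rw [closedNbhd, Set.ncard_insert_of_notMem (by simp) (Set.toFinite _), hreg]
  have hconv : ∀ u : V, (closedNbhd G u ∩ S).ncard = (N u ∩ F).card := by
    intro u
    rw [Set.ncard_eq_toFinset_card', Set.toFinset_inter]
  have hdom : ∀ u : V, 3 ≤ (N u ∩ F).card := fun u => hconv u ▸ hS.1 u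
  have hpair : ∀ u v : V, u ≠ v → (N u ∩ F).card = 3 → (N v ∩ F).card = 3 →
      ((N u ∩ F) ∩ (N v ∩ F)).card ≤ 1 := by
    intro u v huv hu hv
    have h3 := hS.2 u v huv
    have hsd : (symmDiff (closedNbhd G u ∩ S) (closedNbhd G v ∩ S)).ncard
        = (symmDiff (N u ∩ F) (N v ∩ F)).card := by
      rw [Set.ncard_eq_toFinset_card', Set.toFinset_symmDiff, Set.toFinset_inter,
        Set.toFinset_inter]
    rw [hsd] at h3
    set a := N u ∩ F
    set b := N v ∩ F
    have hsd2 : symmDiff a b = (a \ b) ∪ (b \ a) := by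
      rw [symmDiff_def]
      rfl
    have hdisj : Disjoint (a \ b) (b \ a) := disjoint_sdiff_sdiff
    rw [hsd2, Finset.card_union_of_disjoint hdisj] at h3
    have h4 : (a \ b).card + (a ∩ b).card = a.card := Finset.card_sdiff_add_card_inter a b
    have h5 : (b \ a).card + (b ∩ a).card = b.card := Finset.card_sdiff_add_card_inter b a
    rw [Finset.inter_comm] at h5
    omega
  have hmain := ecid_core N F hsym hself hcardN hdom hpair
  have hScard : S.ncard = F.card := Set.ncard_eq_toFinset_card' S
  rw [hScard]
  rw [div_mul_eq_mul_div, div_le_iff₀ (by norm_num : (0:ℚ) < 6)]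
  have : ((5 * Fintype.card V : ℕ) : ℚ) ≤ ((6 * F.card : ℕ) : ℚ) := Nat.cast_le.2 hmain
  push_cast at this
  linarith
end

section
/- If S is an error-correcting identifying code for the infinite ladder graph P_∞ □ P_2, then the lower density of S is at least 7/8; moreover there exists an error-correcting identifying code of density exactly 7/8 (e.g., a period-8 pattern omitting one vertex from each rung-block of 8). -/
open SimpleGraph

variable {V : Type*}

/-- The infinite ladder graph `P_∞ □ P_2` on vertex set `ℤ × Bool`. -/
def ladder : SimpleGraph (ℤ × Bool) :=
  SimpleGraph.fromRel (fun u v =>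
    (u.2 = v.2 ∧ v.1 = u.1 + 1) ∨ (u.1 = v.1 ∧ u.2 ≠ v.2))

/-- The ball of radius `r` about `v` in `G`. -/
def gball (G : SimpleGraph V) (v : V) (r : ℕ) : Set V :=
  {u : V | G.edist v u ≤ (r : ℕ∞)}

open Filter

section Aux


lemma ladder_adj {i j : ℤ} {b c : Bool} :
    ladder.Adj (i,b) (j,c) ↔ (b = c ∧ (j = i + 1 ∨ i = j + 1)) ∨ (i = j ∧ b ≠ c) := by
  simp only [ladder, fromRel_adj, ne_eq, Prod.mk.injEq, not_and]
  constructor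
  · rintro ⟨h1, h2⟩
    rcases h2 with (⟨hb,hi⟩|⟨hi,hb⟩)|(⟨hb,hi⟩|⟨hi,hb⟩) <;> simp_all <;> omega
  · rintro (⟨hb,hi|hi⟩|⟨hi,hb⟩) <;> subst_vars <;> simp_all <;> omega

lemma closedNbhd_ladder (i : ℤ) (b : Bool) :
    closedNbhd ladder (i,b) = {(i-1,b),(i,b),(i+1,b),(i,!b)} := by
  ext ⟨j,c⟩
  simp only [closedNbhd, Set.mem_insert_iff, mem_neighborSet, ladder_adj,
    Set.mem_singleton_iff, Prod.mk.injEq]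
  cases b <;> cases c <;> simp <;> omega



def lD (u v : ℤ × Bool) : ℕ := (v.1 - u.1).natAbs + (if u.2 = v.2 then 0 else 1)

lemma ladder_edist_le (u v : ℤ × Bool) : ladder.edist u v ≤ (lD u v : ℕ∞) := by
  obtain ⟨i, b⟩ := u; obtain ⟨j, c⟩ := v
  have key : ∀ n : ℕ, ∀ i j : ℤ, ∀ b c : Bool, (j - i).natAbs = n →
      ladder.edist (i,b) (j,c) ≤ (lD (i,b) (j,c) : ℕ∞) := by
    intro n
    induction n with
    | zero =>
      intro i j b c h
      have : i = j := by omega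
      subst this
      by_cases hbc : b = c
      · subst hbc; simp [lD, edist_self]
      · have : ladder.Adj (i,b) (i,c) := ladder_adj.mpr (Or.inr ⟨rfl, hbc⟩)
        calc ladder.edist (i,b) (i,c) = 1 := edist_eq_one_iff_adj.mpr this
        _ ≤ _ := by simp [lD, hbc]
    | succ n ih =>
      intro i j b c h
      rcases (by omega : j = i + (n+1) ∨ i = j + (n+1)) with h1 | h1
      · have hadj : ladder.Adj (i,b) (i+1,b) := ladder_adj.mpr (Or.inl ⟨rfl, Or.inl rfl⟩)
        have ht := ladder.edist_triangle (u := (i,b)) (v := (i+1,b)) (w := (j,c))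
        have h2 := ih (i+1) j b c (by omega)
        have h3 : ladder.edist (i,b) (i+1,b) = 1 := edist_eq_one_iff_adj.mpr hadj
        rw [h3] at ht
        refine ht.trans ?_
        have : (1 : ℕ∞) + lD (i+1,b) (j,c) = (lD (i,b) (j,c) : ℕ∞) := by
          simp only [lD]
          norm_cast
          omega
        calc (1:ℕ∞) + ladder.edist (i+1,b) (j,c) ≤ 1 + lD (i+1,b) (j,c) := by
              exact add_le_add_right h2 1
        _ = _ := this
      · have hadj : ladder.Adj (i,b) (i-1,b) := ladder_adj.mpr (Or.inl ⟨rfl, Or.inr (by ring)⟩)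
        have ht := ladder.edist_triangle (u := (i,b)) (v := (i-1,b)) (w := (j,c))
        have h2 := ih (i-1) j b c (by omega)
        have h3 : ladder.edist (i,b) (i-1,b) = 1 := edist_eq_one_iff_adj.mpr hadj
        rw [h3] at ht
        refine ht.trans ?_
        have : (1 : ℕ∞) + lD (i-1,b) (j,c) = (lD (i,b) (j,c) : ℕ∞) := by
          simp only [lD]
          norm_cast
          omega
        calc (1:ℕ∞) + ladder.edist (i-1,b) (j,c) ≤ 1 + lD (i-1,b) (j,c) := by
              exact add_le_add_right h2 1
        _ = _ := this
  exact key _ i j b c rfl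

lemma lD_le_walk {u v : ℤ × Bool} (p : ladder.Walk u v) : lD u v ≤ p.length := by
  induction p with
  | nil => simp [lD]
  | @cons a w' v' h p ih =>
    obtain ⟨i, s⟩ := a; obtain ⟨k, t⟩ := w'
    rw [ladder_adj] at h
    simp only [Walk.length_cons]
    simp only [lD] at *
    rcases h with ⟨hst, hk⟩ | ⟨hik, hst⟩
    · subst hst; omega
    · subst hik
      rcases s <;> rcases t <;> rcases v'.2 <;> simp_all <;> omega

lemma ladder_edist_eq (u v : ℤ × Bool) : ladder.edist u v = (lD u v : ℕ∞) := by
  refine le_antisymm (ladder_edist_le u v) ?_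
  have hne : ladder.edist u v ≠ ⊤ := by
    intro h
    have := ladder_edist_le u v
    rw [h] at this
    simp at this
  obtain ⟨p, hp⟩ := exists_walk_of_edist_ne_top hne
  rw [← hp]
  exact_mod_cast lD_le_walk p



noncomputable def ballF (i : ℤ) (b : Bool) (r : ℕ) : Finset (ℤ × Bool) :=
  (Finset.Icc (i-r) (i+r)) ×ˢ {b} ∪ (Finset.Icc (i-r+1) (i+r-1)) ×ˢ {!b}

lemma gball_eq (i : ℤ) (b : Bool) (r : ℕ) :
    gball ladder (i,b) r = ↑(ballF i b r) := by
  ext ⟨j,c⟩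
  simp only [gball, Set.mem_setOf_eq, ladder_edist_eq, Nat.cast_le, ballF,
    Finset.coe_union, Set.mem_union, Finset.coe_product, Finset.mem_coe,
    Finset.mem_product, Finset.mem_Icc, Finset.mem_singleton, lD,
    Finset.coe_singleton, Set.mem_prod, Set.mem_singleton_iff]
  cases b <;> cases c <;> simp <;> omega

lemma ballF_card (i : ℤ) (b : Bool) (r : ℕ) (hr : 1 ≤ r) :
    (ballF i b r).card = 4 * r := by
  rw [ballF, Finset.card_union_of_disjoint]
  · rw [Finset.card_product, Finset.card_product]
    simp only [Finset.card_singleton, Int.card_Icc]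
    have h1 : (i + r + 1 - (i - r)).toNat = 2*r+1 := by omega
    have h2 : (i + r - 1 + 1 - (i - r + 1)).toNat = 2*r-1 := by omega
    rw [h1, h2]; omega
  · refine Finset.disjoint_left.mpr ?_
    rintro ⟨j,c⟩ h1 h2
    simp only [Finset.mem_product, Finset.mem_singleton] at h1 h2
    rw [h1.2] at h2; simp at h2



lemma fin4 {α : Type*} (a b c d : α) : Set.Finite {a,b,c,d} :=
  (Set.finite_singleton d).insert c |>.insert b |>.insert a

lemma card4_le {α : Type*} (a b c d : α) : ({a,b,c,d} : Set α).ncard ≤ 4 := by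
  apply le_trans (Set.ncard_insert_le _ _)
  have := Set.ncard_insert_le b ({c,d} : Set α)
  have := Set.ncard_insert_le c ({d} : Set α)
  simp_all; omega

-- contradiction window
lemma window_contra {α : Type*} {X S : Set α} {m m' : α} (hX : X.Finite)
    (hcard : X.ncard ≤ 4) (hm : m ∈ X) (hm' : m' ∈ X) (hne : m ≠ m')
    (hmS : m ∉ S) (hm'S : m' ∉ S) (h3 : 3 ≤ (X ∩ S).ncard) : False := by
  have hsub : X ∩ S ⊆ X \ {m, m'} := by
    rintro x ⟨hx, hxS⟩
    refine ⟨hx, ?_⟩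
    rintro (rfl | rfl) <;> [exact hmS hxS; exact hm'S hxS]
  have hsub2 : ({m, m'} : Set α) ⊆ X := by rintro x (rfl | rfl) <;> assumption
  have h2 : (X \ {m, m'}).ncard = X.ncard - 2 := by
    rw [Set.ncard_diff hsub2, Set.ncard_pair hne]
  have := Set.ncard_le_ncard hsub hX.diff
  omega

-- lower-bound window
lemma inter_ge {α : Type*} {X S : Set α} {n k : ℕ} (hX : X.Finite)
    (hn : n ≤ X.ncard) (hk : (X \ S).ncard ≤ k) : n - k ≤ (X ∩ S).ncard := by
  have h : X ∩ S = X \ (X \ S) := (Set.diff_diff_right_self X S).symm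
  rw [h, Set.ncard_diff (Set.diff_subset) hX.diff]
  omega

-- far pair lemma
lemma far_symmDiff {α : Type*} {A B S : Set α} (hA : A.Finite) (hB : B.Finite)
    (hAS : 3 ≤ (A ∩ S).ncard) (hBS : 3 ≤ (B ∩ S).ncard)
    (hAB : (A ∩ B).ncard ≤ 1) : 3 ≤ (symmDiff (A ∩ S) (B ∩ S)).ncard := by
  have he : symmDiff (A ∩ S) (B ∩ S) = ((A ∩ S) \ (B ∩ S)) ∪ ((B ∩ S) \ (A ∩ S)) :=
    Set.symmDiff_def _ _
  have hdisj : Disjoint ((A ∩ S) \ (B ∩ S)) ((B ∩ S) \ (A ∩ S)) :=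
    disjoint_sdiff_sdiff
  rw [he, Set.ncard_union_eq hdisj (hA.inter_of_left S).diff (hB.inter_of_left S).diff]
  have h2 : (A ∩ S) \ (A ∩ B) ⊆ (A ∩ S) \ (B ∩ S) := by
    rintro x ⟨⟨hxA, hxS⟩, hx2⟩
    exact ⟨⟨hxA, hxS⟩, fun h => hx2 ⟨hxA, h.1⟩⟩
  have h2' : (B ∩ S) \ (A ∩ B) ⊆ (B ∩ S) \ (A ∩ S) := by
    rintro x ⟨⟨hxB, hxS⟩, hx2⟩
    exact ⟨⟨hxB, hxS⟩, fun h => hx2 ⟨h.1, hxB⟩⟩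
  have h3 : (A ∩ S).ncard ≤ ((A ∩ S) \ (A ∩ B)).ncard + (A ∩ B).ncard :=
    Set.ncard_le_ncard_diff_add_ncard _ _ (hA.inter_of_left B)
  have h3' : (B ∩ S).ncard ≤ ((B ∩ S) \ (A ∩ B)).ncard + (A ∩ B).ncard :=
    Set.ncard_le_ncard_diff_add_ncard _ _ (hA.inter_of_left B)
  have h4 := Set.ncard_le_ncard h2 (hA.inter_of_left S).diff
  have h4' := Set.ncard_le_ncard h2' (hB.inter_of_left S).diff
  omega

lemma symmDiff_inter {α : Type*} (A B S : Set α) :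
    symmDiff (A ∩ S) (B ∩ S) = (symmDiff A B) ∩ S := by
  ext x; simp [Set.mem_symmDiff]; tauto

lemma W1 (i j : ℤ) (b : Bool) (h : j = i + 1) :
    symmDiff (closedNbhd ladder (i,b)) (closedNbhd ladder (j,b)) =
      {(i-1,b),(i+2,b),(i,!b),(i+1,!b)} := by
  subst h
  rw [closedNbhd_ladder, closedNbhd_ladder]
  ext ⟨j,c⟩
  simp only [Set.mem_symmDiff, Set.mem_insert_iff, Set.mem_singleton_iff, Prod.mk.injEq]
  cases b <;> cases c <;> simp <;> omega

lemma W2 (i : ℤ) (b c : Bool) (h : c = !b) :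
    symmDiff (closedNbhd ladder (i,b)) (closedNbhd ladder (i,c)) =
      {(i-1,b),(i+1,b),(i-1,!b),(i+1,!b)} := by
  subst h
  rw [closedNbhd_ladder, closedNbhd_ladder]
  ext ⟨j,c⟩
  simp only [Set.mem_symmDiff, Set.mem_insert_iff, Set.mem_singleton_iff, Prod.mk.injEq]
  cases b <;> cases c <;> simp <;> omega

lemma W3 (i j : ℤ) (b c : Bool) (h : j = i + 1) (hc : c = !b) :
    symmDiff (closedNbhd ladder (i,b)) (closedNbhd ladder (j,c)) =
      {(i-1,b),(i,b),(i+1,!b),(i+2,!b)} := by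
  subst h; subst hc
  rw [closedNbhd_ladder, closedNbhd_ladder]
  ext ⟨j,c⟩
  simp only [Set.mem_symmDiff, Set.mem_insert_iff, Set.mem_singleton_iff, Prod.mk.injEq]
  cases b <;> cases c <;> simp <;> omega

lemma far_inter {i j : ℤ} {b c : Bool} (h : i + 2 ≤ j) :
    closedNbhd ladder (i,b) ∩ closedNbhd ladder (j,c) ⊆ {(i+1,b)} := by
  rw [closedNbhd_ladder, closedNbhd_ladder]
  rintro ⟨k,d⟩ ⟨h1, h2⟩
  simp only [Set.mem_insert_iff, Set.mem_singleton_iff, Prod.mk.injEq] at *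
  cases b <;> cases c <;> cases d <;> simp_all <;> omega

def Spread4 (S : Set (ℤ × Bool)) : Prop :=
  ∀ u v : ℤ × Bool, u ∉ S → v ∉ S → u ≠ v → 4 ≤ (v.1 - u.1).natAbs

lemma ncard4 {α : Type*} {a b c d : α} (h1 : a ≠ b) (h2 : a ≠ c) (h3 : a ≠ d)
    (h4 : b ≠ c) (h5 : b ≠ d) (h6 : c ≠ d) : ({a,b,c,d} : Set α).ncard = 4 := by
  rw [Set.ncard_insert_of_notMem (by simp [h1, h2, h3])
      ((Set.finite_singleton d).insert c |>.insert b),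
    Set.ncard_insert_of_notMem (by simp [h4, h5]) ((Set.finite_singleton d).insert c),
    Set.ncard_insert_of_notMem (by simp [h6]) (Set.finite_singleton d),
    Set.ncard_singleton]

lemma errIC_spread4 {S : Set (ℤ × Bool)} (hIC : IsErrIC ladder S) : Spread4 S := by
  have key : ∀ (a c : ℤ) (b d : Bool), (a,b) ∉ S → (c,d) ∉ S → (a,b) ≠ (c,d) →
      a ≤ c → c ≤ a + 3 → False := by
    intro a c b d hm hm' hne hac hca
    have hd : d = b ∨ d = !b := by cases b <;> cases d <;> simp
    rcases hd with hd | hd <;> rw [hd] at hm' hne <;>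
      rcases (by omega : c = a ∨ c = a + 1 ∨ c = a + 2 ∨ c = a + 3) with hc | hc | hc | hc <;>
      rw [hc] at hm' hne
    · exact hne rfl
    · -- m'=(a+1,b): domination window at (a,b)
      have h3 := hIC.1 (a,b)
      rw [closedNbhd_ladder] at h3
      exact window_contra (fin4 _ _ _ _) (card4_le _ _ _ _)
        (by simp) (by simp) hne hm hm' h3
    · -- m'=(a+2,b): W2 at a+1
      have h3 := hIC.2 (a+1,b) (a+1,!b) (by cases b <;> simp [Prod.ext_iff])
      rw [symmDiff_inter, W2 (a+1) b (!b) rfl] at h3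
      refine window_contra (fin4 _ _ _ _) (card4_le _ _ _ _)
        ?_ ?_ hne hm hm' h3 <;> cases b <;> simp [Prod.ext_iff] <;> omega
    · -- m'=(a+3,b): W1 at a+1
      have h3 := hIC.2 (a+1,b) (a+2,b) (by cases b <;> simp [Prod.ext_iff] <;> omega)
      rw [symmDiff_inter, W1 (a+1) (a+2) b (by ring)] at h3
      refine window_contra (fin4 _ _ _ _) (card4_le _ _ _ _)
        ?_ ?_ hne hm hm' h3 <;> cases b <;> simp [Prod.ext_iff] <;> omega
    · -- m'=(a,!b): domination window at (a,b)
      have h3 := hIC.1 (a,b)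
      rw [closedNbhd_ladder] at h3
      exact window_contra (fin4 _ _ _ _) (card4_le _ _ _ _)
        (by simp) (by simp) hne hm hm' h3
    · -- m'=(a+1,!b): W1 at a+1
      have h3 := hIC.2 (a+1,b) (a+2,b) (by cases b <;> simp [Prod.ext_iff] <;> omega)
      rw [symmDiff_inter, W1 (a+1) (a+2) b (by ring)] at h3
      refine window_contra (fin4 _ _ _ _) (card4_le _ _ _ _)
        ?_ ?_ hne hm hm' h3 <;> cases b <;> simp [Prod.ext_iff] <;> omega
    · -- m'=(a+2,!b): W2 at a+1
      have h3 := hIC.2 (a+1,b) (a+1,!b) (by cases b <;> simp [Prod.ext_iff])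
      rw [symmDiff_inter, W2 (a+1) b (!b) rfl] at h3
      refine window_contra (fin4 _ _ _ _) (card4_le _ _ _ _)
        ?_ ?_ hne hm hm' h3 <;> cases b <;> simp [Prod.ext_iff] <;> omega
    · -- m'=(a+3,!b): W3 at a+1
      have h3 := hIC.2 (a+1,b) (a+2,!b) (by cases b <;> simp [Prod.ext_iff] <;> omega)
      rw [symmDiff_inter, W3 (a+1) (a+2) b (!b) (by ring) rfl] at h3
      refine window_contra (fin4 _ _ _ _) (card4_le _ _ _ _)
        ?_ ?_ hne hm hm' h3 <;> cases b <;> simp [Prod.ext_iff] <;> omega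
  rintro ⟨a,b⟩ ⟨c,d⟩ hu hv hne
  simp only
  by_contra hcon
  rcases le_total a c with h | h
  · exact key a c b d hu hv hne h (by omega)
  · exact key c a d b hv hu (Ne.symm hne) h (by omega)

lemma missing_le_one {S : Set (ℤ × Bool)} (hS : Spread4 S) {X : Set (ℤ × Bool)}
    {lo hi : ℤ} (hspan : hi ≤ lo + 3) (hX : ∀ p ∈ X, lo ≤ p.1 ∧ p.1 ≤ hi)
    (hfin : X.Finite) : (X \ S).ncard ≤ 1 := by
  rw [Set.ncard_le_one hfin.diff]
  intro p hp q hq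
  by_contra hne
  have h1 := hS p q hp.2 hq.2 hne
  have h2 := hX p hp.1
  have h3 := hX q hq.1
  omega

lemma spread4_errIC {S : Set (ℤ × Bool)} (hS : Spread4 S) : IsErrIC ladder S := by
  have hdom : ∀ v : ℤ × Bool, 3 ≤ (closedNbhd ladder v ∩ S).ncard := by
    rintro ⟨i,b⟩
    rw [closedNbhd_ladder]
    have h4 : ({((i:ℤ)-1,b),(i,b),(i+1,b),(i,!b)} : Set (ℤ × Bool)).ncard = 4 :=
      ncard4 (by cases b <;> simp [Prod.ext_iff] <;> omega)
        (by cases b <;> simp [Prod.ext_iff] <;> omega)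
        (by cases b <;> simp [Prod.ext_iff] <;> omega)
        (by cases b <;> simp [Prod.ext_iff] <;> omega)
        (by cases b <;> simp [Prod.ext_iff]) (by cases b <;> simp [Prod.ext_iff] <;> omega)
    have := inter_ge (k := 1) (fin4 _ _ _ _) h4.ge
      (missing_le_one hS (lo := i-1) (hi := i+1) (by omega)
        (by rintro ⟨j,c⟩ (h|h|h|h) <;> simp_all [Prod.ext_iff] <;> omega) (fin4 _ _ _ _))
    omega
  refine ⟨hdom, ?_⟩
  have key : ∀ (a c : ℤ) (b d : Bool), (a,b) ≠ (c,d) → a ≤ c →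
      3 ≤ (symmDiff (closedNbhd ladder (a,b) ∩ S) (closedNbhd ladder (c,d) ∩ S)).ncard := by
    intro a c b d hne hac
    rcases (by omega : c = a ∨ c = a + 1 ∨ a + 2 ≤ c) with hc | hc | h
    · -- same column, different sides
      rw [hc] at hne ⊢
      have hd : d = !b := by cases b <;> cases d <;> simp_all [Prod.ext_iff]
      rw [symmDiff_inter, W2 a b d hd]
      have h4 : ({((a:ℤ)-1,b),(a+1,b),(a-1,!b),(a+1,!b)} : Set (ℤ × Bool)).ncard = 4 :=
        ncard4 (by cases b <;> simp [Prod.ext_iff] <;> omega)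
          (by cases b <;> simp [Prod.ext_iff])
          (by cases b <;> simp [Prod.ext_iff] <;> omega)
          (by cases b <;> simp [Prod.ext_iff] <;> omega)
          (by cases b <;> simp [Prod.ext_iff]) (by cases b <;> simp [Prod.ext_iff] <;> omega)
      have := inter_ge (k := 1) (fin4 _ _ _ _) h4.ge
        (missing_le_one hS (lo := a-1) (hi := a+1) (by omega)
          (by rintro ⟨j,c'⟩ (h|h|h|h) <;> simp_all [Prod.ext_iff] <;> omega) (fin4 _ _ _ _))
      omega
    · rw [hc] at hne ⊢
      have hd : d = b ∨ d = !b := by cases b <;> cases d <;> simp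
      rcases hd with hd | hd <;> rw [hd]
      · rw [symmDiff_inter, W1 a (a+1) b rfl]
        have h4 : ({((a:ℤ)-1,b),(a+2,b),(a,!b),(a+1,!b)} : Set (ℤ × Bool)).ncard = 4 :=
          ncard4 (by cases b <;> simp [Prod.ext_iff] <;> omega)
            (by cases b <;> simp [Prod.ext_iff])
            (by cases b <;> simp [Prod.ext_iff])
            (by cases b <;> simp [Prod.ext_iff])
            (by cases b <;> simp [Prod.ext_iff]) (by cases b <;> simp [Prod.ext_iff] <;> omega)
        have := inter_ge (k := 1) (fin4 _ _ _ _) h4.ge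
          (missing_le_one hS (lo := a-1) (hi := a+2) (by omega)
            (by rintro ⟨j,c'⟩ (h|h|h|h) <;> simp_all [Prod.ext_iff] <;> omega) (fin4 _ _ _ _))
        omega
      · rw [symmDiff_inter, W3 a (a+1) b (!b) rfl rfl]
        have h4 : ({((a:ℤ)-1,b),(a,b),(a+1,!b),(a+2,!b)} : Set (ℤ × Bool)).ncard = 4 :=
          ncard4 (by cases b <;> simp [Prod.ext_iff] <;> omega)
            (by cases b <;> simp [Prod.ext_iff])
            (by cases b <;> simp [Prod.ext_iff])
            (by cases b <;> simp [Prod.ext_iff])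
            (by cases b <;> simp [Prod.ext_iff]) (by cases b <;> simp [Prod.ext_iff] <;> omega)
        have := inter_ge (k := 1) (fin4 _ _ _ _) h4.ge
          (missing_le_one hS (lo := a-1) (hi := a+2) (by omega)
            (by rintro ⟨j,c'⟩ (h|h|h|h) <;> simp_all [Prod.ext_iff] <;> omega) (fin4 _ _ _ _))
        omega
    · -- far apart
      have hfinA : (closedNbhd ladder (a,b)).Finite := by
        rw [closedNbhd_ladder]; exact fin4 _ _ _ _
      have hfinB : (closedNbhd ladder (c,d)).Finite := by
        rw [closedNbhd_ladder]; exact fin4 _ _ _ _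
      refine far_symmDiff hfinA hfinB (hdom (a,b)) (hdom (c,d)) ?_
      calc (closedNbhd ladder (a,b) ∩ closedNbhd ladder (c,d)).ncard
          ≤ ({((a:ℤ)+1,b)} : Set (ℤ × Bool)).ncard :=
            Set.ncard_le_ncard (far_inter h) (Set.finite_singleton _)
        _ = 1 := Set.ncard_singleton _
  rintro ⟨a,b⟩ ⟨c,d⟩ hne
  rcases le_total a c with h | h
  · exact key a c b d hne h
  · rw [symmDiff_comm]
    exact key c a d b (Ne.symm hne) h



lemma gball_finite (i : ℤ) (b : Bool) (r : ℕ) : (gball ladder (i,b) r).Finite := by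
  rw [gball_eq]; exact (ballF i b r).finite_toSet

lemma gball_ncard (i : ℤ) (b : Bool) (r : ℕ) (hr : 1 ≤ r) :
    (gball ladder (i,b) r).ncard = 4 * r := by
  rw [gball_eq, Set.ncard_coe_finset, ballF_card i b r hr]

lemma mem_gball_col {i : ℤ} {b : Bool} {r : ℕ} {p : ℤ × Bool}
    (hp : p ∈ gball ladder (i,b) r) : i - r ≤ p.1 ∧ p.1 ≤ i + r := by
  rw [gball_eq] at hp
  obtain ⟨j, c⟩ := p
  simp only [ballF, Finset.coe_union, Set.mem_union, Finset.coe_product, Set.mem_prod,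
    Finset.mem_coe, Finset.mem_Icc, Finset.coe_singleton, Set.mem_singleton_iff] at hp
  rcases hp with ⟨⟨h1,h2⟩,_⟩ | ⟨⟨h1,h2⟩,_⟩ <;> constructor <;> simp only <;> omega

lemma spread_ball_missing {S : Set (ℤ × Bool)} (hS : Spread4 S) (i : ℤ) (b : Bool) (r : ℕ) :
    ((gball ladder (i,b) r) \ S).ncard ≤ r/2 + 1 := by
  have key : ((gball ladder (i,b) r) \ S).ncard ≤ (Set.Icc (0:ℤ) (r/2 : ℕ)).ncard := by
    apply Set.ncard_le_ncard_of_injOn (fun p => (p.1 - (i - r))/4)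
    · rintro p ⟨hp, -⟩
      have := mem_gball_col hp
      simp only [Set.mem_Icc]
      omega
    · rintro p ⟨hp, hpS⟩ q ⟨hq, hqS⟩ heq
      by_contra hne
      have h4 := hS p q hpS hqS hne
      have h1 := mem_gball_col hp
      have h2 := mem_gball_col hq
      simp only at heq
      omega
  calc ((gball ladder (i,b) r) \ S).ncard ≤ (Set.Icc (0:ℤ) (r/2 : ℕ)).ncard := key
    _ = r/2 + 1 := by
        rw [← Finset.coe_Icc, Set.ncard_coe_finset, Int.card_Icc]
        omega

lemma spread_ball_lower {S : Set (ℤ × Bool)} (hS : Spread4 S) (i : ℤ) (b : Bool) (r : ℕ)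
    (hr : 1 ≤ r) :
    4 * r ≤ (S ∩ gball ladder (i,b) r).ncard + (r/2 + 1) := by
  have hfin := gball_finite i b r
  have hpart := Set.ncard_inter_add_ncard_diff_eq_ncard (gball ladder (i,b) r) S hfin
  have hmiss := spread_ball_missing hS i b r
  have hcomm : gball ladder (i,b) r ∩ S = S ∩ gball ladder (i,b) r := Set.inter_comm _ _
  rw [hcomm] at hpart
  rw [gball_ncard i b r hr] at hpart
  omega

lemma liminf_lower {S : Set (ℤ × Bool)} (hS : Spread4 S) (v : ℤ × Bool) :
    (7 : ℝ) / 8 ≤ Filter.liminf (fun r : ℕ =>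
      ((S ∩ gball ladder v r).ncard : ℝ) / ((gball ladder v r).ncard : ℝ))
      Filter.atTop := by
  obtain ⟨i, b⟩ := v
  set f : ℕ → ℝ := fun r => ((S ∩ gball ladder (i,b) r).ncard : ℝ) /
      ((gball ladder (i,b) r).ncard : ℝ) with hf
  set g : ℕ → ℝ := fun r => 7/8 - 1/r with hg
  have hgl : Tendsto g atTop (nhds (7/8)) := by
    have h2 := (tendsto_const_nhds (α := ℕ) (x := (7:ℝ)/8)
      (f := atTop)).sub tendsto_one_div_atTop_nhds_zero_nat
    rw [hg]
    simpa using h2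
  have hev : ∀ᶠ r : ℕ in atTop, g r ≤ f r := by
    filter_upwards [eventually_ge_atTop 1] with r hr
    have hlow := spread_ball_lower hS i b r hr
    have hcard := gball_ncard i b r hr
    rw [hf, hg]
    simp only [hcard]
    have hr1 : (1:ℝ) ≤ r := by exact_mod_cast hr
    have hrpos : (0:ℝ) < ((4 * r : ℕ) : ℝ) := by positivity
    rw [le_div_iff₀ hrpos]
    have c2 : ((r/2 : ℕ) : ℝ) ≤ (r:ℝ)/2 := by
      have h := (Nat.cast_le (α := ℝ)).mpr (Nat.div_mul_le_self r 2)
      push_cast at h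
      linarith
    have c1 : (4 * r : ℝ) ≤ ((S ∩ gball ladder (i,b) r).ncard : ℝ) + ((r:ℝ)/2 + 1) := by
      have h := (Nat.cast_le (α := ℝ)).mpr hlow
      push_cast at h
      linarith
    push_cast
    have hr0 : (r:ℝ) ≠ 0 := by linarith
    have key : (7/8 - 1/(r:ℝ)) * (4*(r:ℝ)) = 7/2 * r - 4 := by field_simp; ring
    rw [key]
    linarith [c1]
  have hb : IsBoundedUnder (· ≥ ·) atTop g := hgl.isBoundedUnder_ge
  have hcb : IsCoboundedUnder (· ≥ ·) atTop f :=
    isCoboundedUnder_ge_of_le atTop (x := 1) (fun r => by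
      rw [hf]
      by_cases h0 : ((gball ladder (i,b) r).ncard : ℝ) = 0
      · simp [h0]
      · rw [div_le_one (lt_of_le_of_ne (by positivity) (Ne.symm h0))]
        exact_mod_cast Nat.cast_le.mpr (Set.ncard_le_ncard Set.inter_subset_right
          (gball_finite i b r)))
  calc (7:ℝ)/8 = liminf g atTop := hgl.liminf_eq.symm
    _ ≤ liminf f atTop := liminf_le_liminf hev hb hcb

def M0 : Set (ℤ × Bool) := {p | (p.2 = false ∧ p.1 % 8 = 0) ∨ (p.2 = true ∧ p.1 % 8 = 4)}

lemma spread4_M0 : Spread4 (M0ᶜ) := by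
  rintro ⟨a,b⟩ ⟨c,d⟩ hu hv hne
  simp only [Set.not_notMem, M0, Set.mem_setOf_eq] at hu hv
  simp only
  have hne' : ¬(a = c ∧ b = d) := by
    intro ⟨h1, h2⟩; exact hne (by rw [h1, h2])
  cases b <;> cases d <;> simp_all <;> omega

lemma count_mod (a b ρ : ℤ) (c : Bool) (hρ1 : 0 ≤ ρ) (hρ2 : ρ < 8) :
    {p : ℤ × Bool | p.2 = c ∧ a ≤ p.1 ∧ p.1 ≤ b ∧ p.1 % 8 = ρ}.ncard
      = ((b - ρ)/8 - (a - ρ + 7)/8 + 1).toNat := by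
  have himg : {p : ℤ × Bool | p.2 = c ∧ a ≤ p.1 ∧ p.1 ≤ b ∧ p.1 % 8 = ρ}
      = (fun k => (8*k+ρ, c)) '' (Set.Icc ((a-ρ+7)/8) ((b-ρ)/8)) := by
    ext ⟨j, c'⟩
    simp only [Set.mem_setOf_eq, Set.mem_image, Set.mem_Icc, Prod.mk.injEq]
    constructor
    · rintro ⟨rfl, h1, h2, h3⟩
      exact ⟨(j - ρ)/8, ⟨by omega, by omega⟩, by omega, rfl⟩
    · rintro ⟨k, ⟨hk1, hk2⟩, hj, rfl⟩
      exact ⟨rfl, by omega, by omega, by omega⟩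
  rw [himg, Set.ncard_image_of_injective _ (fun k l h => by
    simp only [Prod.mk.injEq] at h; omega)]
  rw [← Finset.coe_Icc, Set.ncard_coe_finset, Int.card_Icc]
  omega

lemma count_mod_finite (a b ρ : ℤ) (c : Bool) :
    {p : ℤ × Bool | p.2 = c ∧ a ≤ p.1 ∧ p.1 ≤ b ∧ p.1 % 8 = ρ}.Finite := by
  apply Set.Finite.subset ((Finset.Icc a b ×ˢ ({c} : Finset Bool)).finite_toSet)
  rintro ⟨j, c'⟩ ⟨rfl, h1, h2, h3⟩
  simp only [Finset.coe_product, Set.mem_prod, Finset.mem_coe, Finset.mem_Icc,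
    Finset.coe_singleton, Set.mem_singleton_iff]
  exact ⟨⟨h1, h2⟩, trivial⟩

lemma M0_ball_count (i : ℤ) (b : Bool) (r : ℕ) (hr : 1 ≤ r) :
    r/2 ≤ (M0 ∩ gball ladder (i,b) r).ncard + 4 ∧
    (M0 ∩ gball ladder (i,b) r).ncard ≤ r/2 + 4 := by
  set ρ1 : ℤ := if b then 4 else 0 with hρ1
  set ρ2 : ℤ := if b then 0 else 4 with hρ2
  have hdec : M0 ∩ gball ladder (i,b) r =
      {p : ℤ × Bool | p.2 = b ∧ i - r ≤ p.1 ∧ p.1 ≤ i + r ∧ p.1 % 8 = ρ1} ∪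
      {p : ℤ × Bool | p.2 = !b ∧ i - r + 1 ≤ p.1 ∧ p.1 ≤ i + r - 1 ∧ p.1 % 8 = ρ2} := by
    rw [gball_eq]
    ext ⟨j, c⟩
    simp only [M0, Set.mem_inter_iff, Set.mem_setOf_eq, ballF, Finset.coe_union,
      Set.mem_union, Finset.coe_product, Set.mem_prod, Finset.mem_coe, Finset.mem_Icc,
      Finset.coe_singleton, Set.mem_singleton_iff]
    cases b <;> cases c <;> simp_all [hρ1, hρ2] <;> omega
  have hdisj : Disjoint
      {p : ℤ × Bool | p.2 = b ∧ i - r ≤ p.1 ∧ p.1 ≤ i + r ∧ p.1 % 8 = ρ1}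
      {p : ℤ × Bool | p.2 = !b ∧ i - r + 1 ≤ p.1 ∧ p.1 ≤ i + r - 1 ∧ p.1 % 8 = ρ2} := by
    rw [Set.disjoint_left]
    rintro ⟨j, c⟩ ⟨h1, -⟩ ⟨h2, -⟩
    simp only at h1 h2
    rw [h1] at h2; simp at h2
  have hc1 := count_mod (i - r) (i + r) ρ1 b (by rw [hρ1]; split <;> omega)
    (by rw [hρ1]; split <;> omega)
  have hc2 := count_mod (i - r + 1) (i + r - 1) ρ2 (!b) (by rw [hρ2]; split <;> omega)
    (by rw [hρ2]; split <;> omega)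
  rw [hdec, Set.ncard_union_eq hdisj (count_mod_finite _ _ _ _) (count_mod_finite _ _ _ _),
    hc1, hc2]
  have : ρ1 = 0 ∧ ρ2 = 4 ∨ ρ1 = 4 ∧ ρ2 = 0 := by
    rw [hρ1, hρ2]; cases b <;> simp
  omega

lemma S0_ball_card (i : ℤ) (b : Bool) (r : ℕ) (hr : 1 ≤ r) :
    (M0ᶜ ∩ gball ladder (i,b) r).ncard = 4*r - (M0 ∩ gball ladder (i,b) r).ncard := by
  have h1 : M0ᶜ ∩ gball ladder (i,b) r = gball ladder (i,b) r \ (M0 ∩ gball ladder (i,b) r) := by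
    ext p; simp [Set.mem_diff]; tauto
  have hfin : (M0 ∩ gball ladder (i,b) r).Finite :=
    (gball_finite i b r).subset Set.inter_subset_right
  rw [h1, Set.ncard_diff Set.inter_subset_right hfin, gball_ncard i b r hr]

lemma M0_ball_le (i : ℤ) (b : Bool) (r : ℕ) (hr : 1 ≤ r) :
    (M0 ∩ gball ladder (i,b) r).ncard ≤ 4*r := by
  rw [← gball_ncard i b r hr]
  exact Set.ncard_le_ncard Set.inter_subset_right (gball_finite i b r)

lemma S0_tendsto (v : ℤ × Bool) :
    Filter.Tendsto (fun r : ℕ =>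
      ((M0ᶜ ∩ gball ladder v r).ncard : ℝ) / ((gball ladder v r).ncard : ℝ))
      Filter.atTop (nhds ((7 : ℝ) / 8)) := by
  obtain ⟨i, b⟩ := v
  set f : ℕ → ℝ := fun r => ((M0ᶜ ∩ gball ladder (i,b) r).ncard : ℝ) /
      ((gball ladder (i,b) r).ncard : ℝ) with hf
  have hL : Tendsto (fun r : ℕ => 7/8 - 3*(1/(r:ℝ))) atTop (nhds (7/8)) := by
    have h2 := (tendsto_const_nhds (α := ℕ) (x := (7:ℝ)/8) (f := atTop)).sub
      ((tendsto_const_nhds (α := ℕ) (x := (3:ℝ)) (f := atTop)).mul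
        tendsto_one_div_atTop_nhds_zero_nat)
    simpa using h2
  have hU : Tendsto (fun r : ℕ => 7/8 + 3*(1/(r:ℝ))) atTop (nhds (7/8)) := by
    have h2 := (tendsto_const_nhds (α := ℕ) (x := (7:ℝ)/8) (f := atTop)).add
      ((tendsto_const_nhds (α := ℕ) (x := (3:ℝ)) (f := atTop)).mul
        tendsto_one_div_atTop_nhds_zero_nat)
    simpa using h2
  apply tendsto_of_tendsto_of_tendsto_of_le_of_le' hL hU
  · filter_upwards [eventually_ge_atTop 1] with r hr
    have hcard := gball_ncard i b r hr
    have hm := M0_ball_count i b r hr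
    have hmle := M0_ball_le i b r hr
    have hS := S0_ball_card i b r hr
    rw [hf]
    simp only [hcard, hS]
    have hr1 : (1:ℝ) ≤ r := by exact_mod_cast hr
    have hr0 : (r:ℝ) ≠ 0 := by linarith
    have hrpos : (0:ℝ) < ((4 * r : ℕ) : ℝ) := by positivity
    rw [le_div_iff₀ hrpos]
    -- numerator: cast of 4r - m
    have hnum : ((4*r - (M0 ∩ gball ladder (i,b) r).ncard : ℕ) : ℝ)
        = 4*(r:ℝ) - ((M0 ∩ gball ladder (i,b) r).ncard : ℝ) := by
      rw [Nat.cast_sub hmle]; push_cast; ring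
    rw [hnum]
    have hub : ((M0 ∩ gball ladder (i,b) r).ncard : ℝ) ≤ (r:ℝ)/2 + 5 := by
      have h := (Nat.cast_le (α := ℝ)).mpr hm.2
      have h2 : ((r/2 : ℕ) : ℝ) ≤ (r:ℝ)/2 := by
        have hh := (Nat.cast_le (α := ℝ)).mpr (Nat.div_mul_le_self r 2)
        push_cast at hh; linarith
      push_cast at h
      linarith
    have key : (7/8 - 3*(1/(r:ℝ))) * ((4*r:ℕ):ℝ) = 7/2*(r:ℝ) - 12 := by
      push_cast; field_simp; ring
    rw [key]
    linarith
  · filter_upwards [eventually_ge_atTop 1] with r hr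
    have hcard := gball_ncard i b r hr
    have hm := M0_ball_count i b r hr
    have hmle := M0_ball_le i b r hr
    have hS := S0_ball_card i b r hr
    rw [hf]
    simp only [hcard, hS]
    have hr1 : (1:ℝ) ≤ r := by exact_mod_cast hr
    have hr0 : (r:ℝ) ≠ 0 := by linarith
    have hrpos : (0:ℝ) < ((4 * r : ℕ) : ℝ) := by positivity
    rw [div_le_iff₀ hrpos]
    have hnum : ((4*r - (M0 ∩ gball ladder (i,b) r).ncard : ℕ) : ℝ)
        = 4*(r:ℝ) - ((M0 ∩ gball ladder (i,b) r).ncard : ℝ) := by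
      rw [Nat.cast_sub hmle]; push_cast; ring
    rw [hnum]
    have hlb : (r:ℝ)/2 - 5 ≤ ((M0 ∩ gball ladder (i,b) r).ncard : ℝ) := by
      have h := (Nat.cast_le (α := ℝ)).mpr hm.1
      have h2 : (r:ℝ)/2 - 1 ≤ ((r/2 : ℕ) : ℝ) := by
        have hh : r ≤ 2 * (r/2) + 1 := by omega
        have := (Nat.cast_le (α := ℝ)).mpr hh
        push_cast at this; linarith
      push_cast at h
      linarith
    have key : (7/8 + 3*(1/(r:ℝ))) * ((4*r:ℕ):ℝ) = 7/2*(r:ℝ) + 12 := by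
      push_cast; field_simp; ring
    rw [key]
    linarith

end Aux

theorem stmt19 :
    (∀ S : Set (ℤ × Bool), IsErrIC ladder S → ∀ v : ℤ × Bool,
      (7 : ℝ) / 8 ≤ Filter.liminf (fun r : ℕ =>
        ((S ∩ gball ladder v r).ncard : ℝ) / ((gball ladder v r).ncard : ℝ))
        Filter.atTop) ∧
    (∃ S : Set (ℤ × Bool), IsErrIC ladder S ∧ ∀ v : ℤ × Bool,
      Filter.Tendsto (fun r : ℕ =>
        ((S ∩ gball ladder v r).ncard : ℝ) / ((gball ladder v r).ncard : ℝ))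
        Filter.atTop (nhds ((7 : ℝ) / 8))) := by
  constructor
  · intro S hIC v
    exact liminf_lower (errIC_spread4 hIC) v
  · exact ⟨M0ᶜ, spread4_errIC spread4_M0, S0_tendsto⟩
end
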